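/- arXiv:1410.6204 — 5 statements merged into one kernel-verified Lean document; each statement's English description precedes it below -/
import Mathlib

section
/- Let L_n denote the linear tree (path graph) on the vertex set V = {1,…,n}. Then for every finite simple connected graph G on V, every function f : V → ℝ with f ≥ 0, and every vertex j ∈ V, one has M_{[G]} f(j) ≤ M_{[L_n]} f(j). -/
open scoped Classical
open Finset

noncomputable section

variable {V : Type*} [Fintype V]

/-- metric ball of radius `r` centered at `v` in the graph `G` -/
def gBall (G : SimpleGraph V) (v : V) (r : ℕ) : Finset V :=
  Finset.univ.filter fun w => G.dist v w ≤ r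

/-- Hardy–Littlewood maximal operator on the graph `G` -/
def maxOp (G : SimpleGraph V) (f : V → ℝ) (v : V) : ℝ :=
  ⨆ k : Fin (Fintype.card V), (∑ w ∈ gBall G v k.1, |f w|) / ((gBall G v k.1).card : ℝ)

/-- ℓ^p (quasi)norm of a function on the vertices -/
def pNorm (p : ℝ) (f : V → ℝ) : ℝ := (∑ v, |f v| ^ p) ^ (1 / p)

/-- operator (quasi)norm of the maximal operator of `G` on ℓ^p -/
def opNorm (G : SimpleGraph V) (p : ℝ) : ℝ :=
  ⨆ f : {f : V → ℝ // f ≠ 0}, pNorm p (maxOp G f.1) / pNorm p f.1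

/-- weak ℓ^p norm -/
def wNorm (p : ℝ) (f : V → ℝ) : ℝ :=
  ⨆ t : {t : ℝ // 0 < t},
    t.1 * ((Finset.univ.filter fun v => t.1 < |f v|).card : ℝ) ^ (1 / p)

/-- weak-type operator norm of the maximal operator of `G` -/
def wOpNorm (G : SimpleGraph V) (p : ℝ) : ℝ :=
  ⨆ f : {f : V → ℝ // f ≠ 0}, wNorm p (maxOp G f.1) / pNorm p f.1

/-- maximal operator over all graphs on `V` isomorphic to `G` -/
def maxOpIso (G : SimpleGraph V) (f : V → ℝ) (j : V) : ℝ :=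
  ⨆ H : {H : SimpleGraph V // Nonempty (H ≃g G)}, maxOp H.1 f j

/-- operator norm of `maxOpIso` on ℓ^p -/
def opNormIso (G : SimpleGraph V) (p : ℝ) : ℝ :=
  ⨆ f : {f : V → ℝ // f ≠ 0}, pNorm p (maxOpIso G f.1) / pNorm p f.1

/-- Kronecker delta at `k` -/
def kdelta (k : V) : V → ℝ := fun j => if j = k then 1 else 0

/-- star graph on `Fin n` with center `0` -/
def starGraph (n : ℕ) : SimpleGraph (Fin n) :=
  SimpleGraph.fromRel fun i _ => i.1 = 0

/-- diameter of a graph -/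
def gDiam (G : SimpleGraph V) : ℕ :=
  Finset.univ.sup fun p : V × V => G.dist p.1 p.2

/-- dilation index of a graph -/
def dilIndex (G : SimpleGraph V) : ℝ :=
  ⨆ x : V, ⨆ r : {r : ℕ // r ≤ gDiam G},
    ((gBall G x (3 * r.1)).card : ℝ) / ((gBall G x r.1).card : ℝ)

/-- overlapping index of a graph -/
def overlapIndex (G : SimpleGraph V) : ℕ :=
  sInf { r : ℕ | ∀ J : Finset (V × ℕ), ∃ I ⊆ J,
    J.biUnion (fun j => gBall G j.1 j.2) = I.biUnion (fun i => gBall G i.1 i.2) ∧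
    ∀ v : V, (I.filter fun i => v ∈ gBall G i.1 i.2).card ≤ r }


section Aux

open SimpleGraph

/-- Lower bound for walk lengths in the path graph. -/
lemma pathWalk_lb {n : ℕ} {a b : Fin n} (p : (SimpleGraph.pathGraph n).Walk a b) :
    (b.1 : ℤ) ≤ (a.1 : ℤ) + p.length := by
  induction p with
  | nil => simp
  | @cons u c w h q ih =>
    rw [SimpleGraph.pathGraph_adj] at h
    simp only [SimpleGraph.Walk.length_cons]
    omega

/-- Distance from the left endpoint in the path graph. -/
lemma pathGraph_dist_zero {n : ℕ} (hn : 0 < n) (i : Fin n) :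
    (SimpleGraph.pathGraph n).dist ⟨0, hn⟩ i = i.1 := by
  obtain ⟨m, rfl⟩ := Nat.exists_eq_succ_of_ne_zero hn.ne'
  have hconn : (SimpleGraph.pathGraph (m + 1)).Connected := SimpleGraph.pathGraph_connected m
  apply le_antisymm
  · have key : ∀ k : ℕ, ∀ i : Fin (m + 1), i.1 = k →
        (SimpleGraph.pathGraph (m + 1)).dist ⟨0, hn⟩ i ≤ k := by
      intro k
      induction k with
      | zero =>
        intro i hi
        have : i = ⟨0, hn⟩ := Fin.ext hi
        simp [this, SimpleGraph.dist_self]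
      | succ k ih =>
        intro i hi
        have hk : k < m + 1 := by omega
        have hadj : (SimpleGraph.pathGraph (m + 1)).Adj ⟨k, hk⟩ i := by
          rw [SimpleGraph.pathGraph_adj]; left; simp [hi]
        have h1 : (SimpleGraph.pathGraph (m + 1)).dist ⟨k, hk⟩ i = 1 :=
          SimpleGraph.dist_eq_one_iff_adj.mpr hadj
        have h2 := hconn.dist_triangle (u := (⟨0, hn⟩ : Fin (m + 1))) (v := ⟨k, hk⟩) (w := i)
        have h3 := ih ⟨k, hk⟩ rfl
        omega
    exact key i.1 i rfl
  · show (i.1 : ℕ) ≤ (SimpleGraph.pathGraph (m + 1)).dist ⟨0, hn⟩ i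
    obtain ⟨p, hp⟩ := hconn.exists_walk_length_eq_dist ⟨0, hn⟩ i
    have := pathWalk_lb p
    rw [hp] at this
    simp only [Fin.val_mk, Nat.cast_zero, zero_add] at this
    omega

/-- Distance is preserved under relabeling by an equivalence. -/
lemma dist_comap {V W : Type*} (f : V ≃ W) (G : SimpleGraph W) (a b : V) :
    (G.comap f.toEmbedding).dist a b = G.dist (f a) (f b) := by
  set H := G.comap f.toEmbedding with hH
  let φ : H ≃g G := SimpleGraph.Iso.comap f G
  have toG : ∀ {x y : V} (p : H.Walk x y), ∃ q : G.Walk (f x) (f y), q.length = p.length := by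
    intro x y p
    exact ⟨p.map φ.toHom, SimpleGraph.Walk.length_map ..⟩
  have toH : ∀ {x y : V} (q : G.Walk (f x) (f y)), ∃ p : H.Walk x y, p.length = q.length := by
    intro x y q
    refine ⟨(q.map φ.symm.toHom).copy (Equiv.symm_apply_apply f x) (Equiv.symm_apply_apply f y),
      ?_⟩
    exact (SimpleGraph.Walk.length_copy ..).trans (SimpleGraph.Walk.length_map ..)
  by_cases h : H.Reachable a b
  · obtain ⟨p, hp⟩ := h.exists_walk_length_eq_dist
    obtain ⟨q, hq⟩ := toG p
    have h2 : G.dist (f a) (f b) ≤ q.length := SimpleGraph.dist_le q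
    have hr : G.Reachable (f a) (f b) := ⟨q⟩
    obtain ⟨q', hq'⟩ := hr.exists_walk_length_eq_dist
    obtain ⟨p', hp'⟩ := toH q'
    have h1 : H.dist a b ≤ p'.length := SimpleGraph.dist_le p'
    omega
  · have h' : ¬G.Reachable (f a) (f b) := by
      rintro ⟨q⟩
      obtain ⟨p, -⟩ := toH q
      exact h ⟨p⟩
    rw [SimpleGraph.dist_eq_zero_of_not_reachable h,
      SimpleGraph.dist_eq_zero_of_not_reachable h']

/-- Any average over a finset containing `j` is dominated by `maxOpIso` of the path graph. -/
lemma avg_le_maxOpIso_path {n : ℕ} (f : Fin n → ℝ) (j : Fin n)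
    (S : Finset (Fin n)) (hj : j ∈ S) :
    (∑ w ∈ S, |f w|) / (S.card : ℝ) ≤ maxOpIso (SimpleGraph.pathGraph n) f j := by
  have hn : 0 < n := j.2.trans_le' (Nat.zero_le _)
  set m := S.card with hm
  have hm1 : 1 ≤ m := Finset.card_pos.mpr ⟨j, hj⟩
  have hmn : m ≤ n := by
    simpa using (Finset.card_le_univ S).trans_eq (by simp)
  -- the finset of the first `m` vertices
  set T : Finset (Fin n) := Finset.univ.map (Fin.castLEEmb hmn) with hT
  have hTmem : ∀ x : Fin n, x ∈ T ↔ x.1 < m := by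
    intro x
    constructor
    · rintro hx
      rw [hT, Finset.mem_map] at hx
      obtain ⟨a, -, rfl⟩ := hx
      exact a.2
    · intro hx
      rw [hT, Finset.mem_map]
      exact ⟨⟨x.1, hx⟩, Finset.mem_univ _, by ext; simp⟩
  have hTcard : T.card = m := by simp [hT]
  -- a permutation sending T onto S
  have hcard1 : Fintype.card {x // x ∈ T} = Fintype.card {x // x ∈ S} := by
    simp [Fintype.card_coe, hTcard, hm]
  have hcard2 : Fintype.card {x // ¬ x ∈ T} = Fintype.card {x // ¬ x ∈ S} := by
    rw [Fintype.card_subtype_compl, Fintype.card_subtype_compl, hcard1]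
  let eS : {x // x ∈ T} ≃ {x // x ∈ S} := Fintype.equivOfCardEq hcard1
  let eC : {x // ¬ x ∈ T} ≃ {x // ¬ x ∈ S} := Fintype.equivOfCardEq hcard2
  let σ0 : Equiv.Perm (Fin n) := Equiv.subtypeCongr eS eC
  have hmem0 : ∀ x : Fin n, σ0 x ∈ S ↔ x ∈ T := by
    intro x
    by_cases hx : x ∈ T
    · simp only [hx, iff_true]
      have hx' : σ0 x = (eS ⟨x, hx⟩ : Fin n) := by simp [σ0, Equiv.subtypeCongr, hx]
      rw [hx']
      exact (eS ⟨x, hx⟩).2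
    · simp only [hx, iff_false]
      have hx' : σ0 x = (eC ⟨x, hx⟩ : Fin n) := by simp [σ0, Equiv.subtypeCongr, hx]
      rw [hx']
      exact (eC ⟨x, hx⟩).2
  set i0 : Fin n := ⟨0, hn⟩ with hi0
  have hi0T : i0 ∈ T := (hTmem i0).mpr (by show 0 < m; omega)
  have hjT : σ0.symm j ∈ T := by
    rw [← hmem0 (σ0.symm j), Equiv.apply_symm_apply]; exact hj
  let τ : Equiv.Perm (Fin n) := Equiv.swap i0 (σ0.symm j)
  have hτT : ∀ x : Fin n, τ x ∈ T ↔ x ∈ T := by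
    intro x
    rcases eq_or_ne x i0 with rfl | h1
    · simp [τ, Equiv.swap_apply_left, hjT, hi0T]
    · rcases eq_or_ne x (σ0.symm j) with rfl | h2
      · simp [τ, Equiv.swap_apply_right, hjT, hi0T]
      · rw [show τ x = x from Equiv.swap_apply_of_ne_of_ne h1 h2]
  let σ : Equiv.Perm (Fin n) := τ.trans σ0
  have hσ0 : σ i0 = j := by
    simp [σ, τ, Equiv.swap_apply_left]
  have hmem : ∀ x : Fin n, σ x ∈ S ↔ x ∈ T := by
    intro x
    rw [show σ x = σ0 (τ x) from rfl, hmem0, hτT]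
  -- the relabeled path graph
  set H : SimpleGraph (Fin n) := (SimpleGraph.pathGraph n).comap σ.symm.toEmbedding with hHdef
  have hiso : Nonempty (H ≃g SimpleGraph.pathGraph n) :=
    ⟨SimpleGraph.Iso.comap σ.symm (SimpleGraph.pathGraph n)⟩
  have hsymmj : σ.symm j = i0 := by rw [← hσ0, Equiv.symm_apply_apply]
  have hball : gBall H j (m - 1) = S := by
    ext w
    rw [gBall, Finset.mem_filter]
    have hd : H.dist j w = (σ.symm w).1 := by
      rw [hHdef, dist_comap, hsymmj, pathGraph_dist_zero hn]
    constructor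
    · rintro ⟨-, hw⟩
      rw [hd] at hw
      have h1 : σ.symm w ∈ T := (hTmem _).mpr (by omega)
      have h2 := (hmem (σ.symm w)).mpr h1
      rwa [Equiv.apply_symm_apply] at h2
    · intro hw
      refine ⟨Finset.mem_univ _, ?_⟩
      have h1 : σ.symm w ∈ T := by
        rw [← hmem (σ.symm w), Equiv.apply_symm_apply]; exact hw
      have h2 := (hTmem _).mp h1
      rw [hd]; omega
  -- conclude
  have hlt : m - 1 < Fintype.card (Fin n) := by
    rw [Fintype.card_fin]; omega
  have step1 : (∑ w ∈ S, |f w|) / (S.card : ℝ) ≤ maxOp H f j := by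
    have key := le_ciSup (f := fun k : Fin (Fintype.card (Fin n)) =>
        (∑ w ∈ gBall H j k.1, |f w|) / ((gBall H j k.1).card : ℝ))
      (Set.Finite.bddAbove (Set.finite_range _)) ⟨m - 1, hlt⟩
    rw [maxOp]
    simpa [hball] using key
  refine step1.trans ?_
  exact le_ciSup (f := fun H' : {H' : SimpleGraph (Fin n) //
      Nonempty (H' ≃g SimpleGraph.pathGraph n)} => maxOp H'.1 f j)
    (Set.Finite.bddAbove (Set.finite_range _)) ⟨H, hiso⟩

end Aux

/-- the isomorphism-maximal operator of any graph is dominated by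
that of the linear tree. -/
theorem stmt2 (n : ℕ) (G : SimpleGraph (Fin n)) (hG : G.Connected)
    (f : Fin n → ℝ) (hf : ∀ v, 0 ≤ f v) (j : Fin n) :
    maxOpIso G f j ≤ maxOpIso (SimpleGraph.pathGraph n) f j := by
  have hn : 0 < n := j.2.trans_le' (Nat.zero_le _)
  have : Nonempty {H : SimpleGraph (Fin n) // Nonempty (H ≃g G)} := ⟨⟨G, ⟨RelIso.refl G.Adj⟩⟩⟩
  apply ciSup_le
  rintro ⟨H, -⟩
  have : Nonempty (Fin (Fintype.card (Fin n))) := ⟨⟨0, by simp [hn]⟩⟩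
  apply ciSup_le
  intro k
  exact avg_le_maxOpIso_path f j _ (by simp [gBall, SimpleGraph.dist_self])
end
end

section
/- Let V be a finite set with n elements, let 0 < p ≤ 1, and let T be a sublinear operator mapping functions f : V → ℝ to functions Tf : V → ℝ, i.e. |T(f+g)(j)| ≤ |Tf(j)| + |Tg(j)| and |T(c·f)(j)| = |c|·|Tf(j)| for all f, g, all scalars c ∈ ℝ, and all j ∈ V. Then the operator norm of T on ℓ^p satisfies sup{‖Tf‖_p/‖f‖_p : f ≢ 0} = max_{k∈V} ‖T δ_k‖_p. -/
open scoped Classical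
open Finset

noncomputable section

variable {V : Type*} [Fintype V]

private lemma rpow_add_le_aux {p : ℝ} (hp : 0 ≤ p) (hp1 : p ≤ 1) {a b : ℝ}
    (ha : 0 ≤ a) (hb : 0 ≤ b) : (a + b) ^ p ≤ a ^ p + b ^ p := by
  have h := NNReal.coe_le_coe.2 (NNReal.rpow_add_le_add_rpow ⟨a, ha⟩ ⟨b, hb⟩ hp hp1)
  push_cast [NNReal.coe_rpow] at h
  exact h

private lemma sum_rpow_le_aux {ι : Type*} (s : Finset ι) (g : ι → ℝ)
    (hg : ∀ i ∈ s, 0 ≤ g i) {p : ℝ} (hp0 : 0 < p) (hp1 : p ≤ 1) :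
    (∑ i ∈ s, g i) ^ p ≤ ∑ i ∈ s, g i ^ p := by
  induction s using Finset.cons_induction with
  | empty => simp [Real.zero_rpow hp0.ne']
  | cons i s his ih =>
    rw [Finset.sum_cons, Finset.sum_cons]
    have hs : ∀ j ∈ s, 0 ≤ g j := fun j hj => hg j (Finset.mem_cons_of_mem hj)
    have h1 : (g i + ∑ j ∈ s, g j) ^ p ≤ g i ^ p + (∑ j ∈ s, g j) ^ p :=
      rpow_add_le_aux hp0.le hp1 (hg i (Finset.mem_cons_self _ _))
        (Finset.sum_nonneg hs)
    exact h1.trans (add_le_add_right (ih hs) _)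

/-- for 0 < p ≤ 1, the ℓ^p norm of a sublinear operator is attained
on Kronecker deltas. -/
theorem stmt4 {V : Type*} [Fintype V] [Nonempty V] (p : ℝ) (hp0 : 0 < p) (hp1 : p ≤ 1)
    (T : (V → ℝ) → (V → ℝ))
    (hsub : ∀ (f g : V → ℝ) (j : V), |T (f + g) j| ≤ |T f j| + |T g j|)
    (hhom : ∀ (c : ℝ) (f : V → ℝ) (j : V), |T (c • f) j| = |c| * |T f j|) :
    (⨆ f : {f : V → ℝ // f ≠ 0}, pNorm p (T f.1) / pNorm p f.1)
      = ⨆ k : V, pNorm p (T (kdelta k)) := by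
  classical
  set M := ⨆ k : V, pNorm p (T (kdelta k)) with hM
  have hpnn : ∀ f : V → ℝ, 0 ≤ pNorm p f := fun f =>
    Real.rpow_nonneg (Finset.sum_nonneg fun v _ => Real.rpow_nonneg (abs_nonneg _) p) _
  have hbddk : BddAbove (Set.range fun k : V => pNorm p (T (kdelta k))) :=
    Set.Finite.bddAbove (Set.finite_range _)
  have hMnn : 0 ≤ M := le_ciSup_of_le hbddk (Classical.arbitrary V) (hpnn _)
  have hdne : ∀ k : V, kdelta k ≠ 0 := by
    intro k h
    have := congrFun h k
    simp [kdelta] at this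
  have hdelta : ∀ k : V, pNorm p (kdelta k) = 1 := by
    intro k
    unfold pNorm kdelta
    rw [Finset.sum_eq_single k]
    · simp
    · intro b _ hb; simp [hb, Real.zero_rpow hp0.ne']
    · simp
  have hTzero : ∀ j : V, |T 0 j| = 0 := by
    intro j
    have := hhom 0 (0 : V → ℝ) j
    simpa using this
  have hsum : ∀ (s : Finset V) (g : V → V → ℝ) (j : V),
      |T (∑ i ∈ s, g i) j| ≤ ∑ i ∈ s, |T (g i) j| := by
    intro s g j
    induction s using Finset.cons_induction with
    | empty => simpa using (hTzero j).le
    | cons i s his ih =>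
      rw [Finset.sum_cons, Finset.sum_cons]
      exact (hsub (g i) (∑ i ∈ s, g i) j).trans (add_le_add_right ih _)
  have hdecomp : ∀ f : V → ℝ, f = ∑ k, f k • kdelta k := by
    intro f; funext j
    rw [Finset.sum_apply]
    simp [kdelta]
  have hpt : ∀ (f : V → ℝ) (j : V), |T f j| ≤ ∑ k, |f k| * |T (kdelta k) j| := by
    intro f j
    calc |T f j| = |T (∑ k, f k • kdelta k) j| := by rw [← hdecomp f]
      _ ≤ ∑ k, |T (f k • kdelta k) j| := hsum _ _ j
      _ = ∑ k, |f k| * |T (kdelta k) j| := by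
          exact Finset.sum_congr rfl fun k _ => hhom (f k) (kdelta k) j
  have hSnn : ∀ f : V → ℝ, 0 ≤ ∑ v, |f v| ^ p :=
    fun f => Finset.sum_nonneg fun v _ => Real.rpow_nonneg (abs_nonneg _) p
  have hpow : ∀ f : V → ℝ, pNorm p f ^ p = ∑ v, |f v| ^ p := by
    intro f
    unfold pNorm
    rw [← Real.rpow_mul (hSnn f), one_div_mul_cancel hp0.ne', Real.rpow_one]
  have key : ∀ f : V → ℝ, pNorm p (T f) ≤ M * pNorm p f := by
    intro f
    have h1 : ∀ j : V, |T f j| ^ p ≤ ∑ k, |f k| ^ p * |T (kdelta k) j| ^ p := by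
      intro j
      calc |T f j| ^ p ≤ (∑ k, |f k| * |T (kdelta k) j|) ^ p :=
            Real.rpow_le_rpow (abs_nonneg _) (hpt f j) hp0.le
        _ ≤ ∑ k, (|f k| * |T (kdelta k) j|) ^ p :=
            sum_rpow_le_aux _ _ (fun k _ => mul_nonneg (abs_nonneg _) (abs_nonneg _)) hp0 hp1
        _ = ∑ k, |f k| ^ p * |T (kdelta k) j| ^ p :=
            Finset.sum_congr rfl fun k _ => Real.mul_rpow (abs_nonneg _) (abs_nonneg _)
    have h3 : ∀ k : V, (∑ j, |T (kdelta k) j| ^ p) ≤ M ^ p := by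
      intro k
      have hk : pNorm p (T (kdelta k)) ≤ M := le_ciSup hbddk k
      have := Real.rpow_le_rpow (hpnn _) hk hp0.le
      rwa [hpow] at this
    have h2 : (∑ j, |T f j| ^ p) ≤ M ^ p * ∑ k, |f k| ^ p := by
      calc (∑ j, |T f j| ^ p) ≤ ∑ j, ∑ k, |f k| ^ p * |T (kdelta k) j| ^ p :=
            Finset.sum_le_sum fun j _ => h1 j
        _ = ∑ k, |f k| ^ p * ∑ j, |T (kdelta k) j| ^ p := by
            rw [Finset.sum_comm]
            exact Finset.sum_congr rfl fun k _ => (Finset.mul_sum _ _ _).symm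
        _ ≤ ∑ k, |f k| ^ p * M ^ p := by
            refine Finset.sum_le_sum fun k _ => ?_
            exact mul_le_mul_of_nonneg_left (h3 k) (Real.rpow_nonneg (abs_nonneg _) p)
        _ = M ^ p * ∑ k, |f k| ^ p := by rw [← Finset.sum_mul, mul_comm]
    have h4 : pNorm p (T f) ≤ (M ^ p * ∑ k, |f k| ^ p) ^ (1 / p) := by
      unfold pNorm
      exact Real.rpow_le_rpow (hSnn _) h2 (by positivity)
    calc pNorm p (T f) ≤ (M ^ p * ∑ k, |f k| ^ p) ^ (1 / p) := h4
      _ = M * pNorm p f := by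
          rw [Real.mul_rpow (Real.rpow_nonneg hMnn p) (hSnn f),
            ← Real.rpow_mul hMnn, mul_one_div, div_self hp0.ne', Real.rpow_one]
          rfl
  have hpos : ∀ f : V → ℝ, f ≠ 0 → 0 < pNorm p f := by
    intro f hf
    obtain ⟨v, hv⟩ : ∃ v, f v ≠ 0 := by
      by_contra h; push_neg at h; exact hf (funext h)
    exact Real.rpow_pos_of_pos (Finset.sum_pos'
      (fun i _ => Real.rpow_nonneg (abs_nonneg _) p)
      ⟨v, Finset.mem_univ v, Real.rpow_pos_of_pos (abs_pos.2 hv) p⟩) _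
  have hbddf : BddAbove (Set.range fun f : {f : V → ℝ // f ≠ 0} =>
      pNorm p (T f.1) / pNorm p f.1) := by
    refine ⟨M, ?_⟩
    rintro x ⟨f, rfl⟩
    rw [div_le_iff₀ (hpos f.1 f.2)]
    exact key f.1
  have hNe : Nonempty {f : V → ℝ // f ≠ 0} := ⟨⟨kdelta (Classical.arbitrary V), hdne _⟩⟩
  apply le_antisymm
  · apply ciSup_le
    intro f
    rw [div_le_iff₀ (hpos f.1 f.2)]
    exact (key f.1).trans_eq rfl
  · apply ciSup_le
    intro k
    have heq : pNorm p (T (kdelta k)) =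
        pNorm p (T (⟨kdelta k, hdne k⟩ : {f : V → ℝ // f ≠ 0}).1) /
          pNorm p (⟨kdelta k, hdne k⟩ : {f : V → ℝ // f ≠ 0}).1 := by
      simp [hdelta k]
    rw [heq]
    exact le_ciSup hbddf ⟨kdelta k, hdne k⟩
end
end

section
/- Let K_n be the complete graph on n ≥ 2 vertices and let 0 < p ≤ 1. Then ‖M_{K_n}‖_p = (1 + (n-1)/n^p)^{1/p}. -/
open scoped Classical
open Finset

noncomputable section

variable {V : Type*} [Fintype V]

open scoped NNReal in
theorem myadd_rpow (x y p : ℝ) (hx : 0 ≤ x) (hy : 0 ≤ y) (hp0 : 0 < p) (hp1 : p ≤ 1) :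
    (x + y) ^ p ≤ x ^ p + y ^ p := by
  have h := NNReal.rpow_add_le_add_rpow x.toNNReal y.toNNReal hp0.le hp1
  have h2 : ((x.toNNReal + y.toNNReal : ℝ≥0) : ℝ) = x + y := by
    simp [Real.coe_toNNReal, hx, hy]
  calc (x+y)^p = (((x.toNNReal + y.toNNReal : ℝ≥0) : ℝ))^p := by rw [h2]
    _ = (((x.toNNReal + y.toNNReal) ^ p : ℝ≥0) : ℝ) := by rw [NNReal.coe_rpow]
    _ ≤ ((x.toNNReal ^ p + y.toNNReal ^ p : ℝ≥0) : ℝ) := by exact_mod_cast h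
    _ = x ^ p + y ^ p := by
        rw [NNReal.coe_add, NNReal.coe_rpow, NNReal.coe_rpow, Real.coe_toNNReal _ hx,
          Real.coe_toNNReal _ hy]

theorem mysum_rpow {ι : Type*} (s : Finset ι) (f : ι → ℝ) (hf : ∀ i ∈ s, 0 ≤ f i)
    {p : ℝ} (hp0 : 0 < p) (hp1 : p ≤ 1) : (∑ i ∈ s, f i) ^ p ≤ ∑ i ∈ s, f i ^ p := by
  induction s using Finset.cons_induction with
  | empty => simp [Real.zero_rpow hp0.ne']
  | cons a s ha ih =>
    rw [Finset.sum_cons, Finset.sum_cons]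
    calc (f a + ∑ i ∈ s, f i) ^ p ≤ f a ^ p + (∑ i ∈ s, f i) ^ p :=
          myadd_rpow _ _ _ (hf a (mem_cons_self a s))
            (Finset.sum_nonneg fun i hi => hf i (mem_cons.mpr (Or.inr hi))) hp0 hp1
      _ ≤ f a ^ p + ∑ i ∈ s, f i ^ p := by
          gcongr
          exact ih fun i hi => hf i (mem_cons.mpr (Or.inr hi))

theorem gBall_top_zero (n : ℕ) (v : Fin n) : gBall (⊤ : SimpleGraph (Fin n)) v 0 = {v} := by
  ext w; simp only [gBall, mem_filter, mem_univ, true_and, SimpleGraph.dist_top,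
    Finset.mem_singleton, Nat.le_zero]
  split <;> simp_all [eq_comm]

theorem gBall_top_pos (n : ℕ) (v : Fin n) (k : ℕ) (hk : 0 < k) :
    gBall (⊤ : SimpleGraph (Fin n)) v k = Finset.univ := by
  ext w; simp only [gBall, mem_filter, mem_univ, true_and, SimpleGraph.dist_top, iff_true]
  split <;> omega

theorem maxOp_top (n : ℕ) (hn : 2 ≤ n) (f : Fin n → ℝ) (v : Fin n) :
    maxOp (⊤ : SimpleGraph (Fin n)) f v = max |f v| ((∑ w, |f w|) / n) := by
  have hterm : ∀ k : Fin (Fintype.card (Fin n)),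
      (∑ w ∈ gBall (⊤ : SimpleGraph (Fin n)) v k.1, |f w|) /
        (((gBall (⊤ : SimpleGraph (Fin n)) v k.1).card : ℝ)) =
      if k.1 = 0 then |f v| else (∑ w, |f w|) / n := by
    intro k
    rcases Nat.eq_zero_or_pos k.1 with h | h
    · simp [h, gBall_top_zero]
    · rw [gBall_top_pos n v _ h]
      simp [h.ne', Finset.card_univ]
  have hne : Nonempty (Fin (Fintype.card (Fin n))) := ⟨⟨0, by simp; omega⟩⟩
  have hbdd : BddAbove (Set.range fun k : Fin (Fintype.card (Fin n)) =>
      (∑ w ∈ gBall (⊤ : SimpleGraph (Fin n)) v k.1, |f w|) /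
        (((gBall (⊤ : SimpleGraph (Fin n)) v k.1).card : ℝ))) :=
    Set.Finite.bddAbove (Set.finite_range _)
  apply le_antisymm
  · apply ciSup_le
    intro k
    rw [hterm k]
    split
    · exact le_max_left _ _
    · exact le_max_right _ _
  · apply max_le
    · have := le_ciSup hbdd (⟨0, by simp; omega⟩ : Fin (Fintype.card (Fin n)))
      rwa [hterm] at this
    · have := le_ciSup hbdd (⟨1, by simp; omega⟩ : Fin (Fintype.card (Fin n)))
      rwa [hterm] at this

theorem key_sum (n : ℕ) (hn : 2 ≤ n) (f : Fin n → ℝ) (p : ℝ) (hp0 : 0 < p) (hp1 : p ≤ 1) :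
    ∑ v, (max |f v| ((∑ w, |f w|) / n)) ^ p
      ≤ (1 + ((n : ℝ) - 1) / (n : ℝ) ^ p) * ∑ v, |f v| ^ p := by
  have hn0 : (0:ℝ) < n := by positivity
  set T : ℝ := ∑ w, |f w| with hT
  set A : ℝ := T / n with hAdef
  set S : ℝ := ∑ v, |f v| ^ p with hS
  have hT0 : 0 ≤ T := Finset.sum_nonneg fun _ _ => abs_nonneg _
  have hA0 : 0 ≤ A := by positivity
  haveI : Nonempty (Fin n) := ⟨⟨0, by omega⟩⟩
  obtain ⟨v₀, -, hmax⟩ := Finset.exists_max_image Finset.univ (fun v => |f v|) univ_nonempty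
  have hA : A ≤ |f v₀| := by
    rw [hAdef, div_le_iff₀ hn0, hT]
    calc ∑ w, |f w| ≤ ∑ _w : Fin n, |f v₀| :=
          Finset.sum_le_sum fun w _ => hmax w (mem_univ w)
      _ = |f v₀| * n := by simp [Finset.card_univ, mul_comm]
  have hsplit : ∑ v, (max |f v| A) ^ p
      = |f v₀| ^ p + ∑ v ∈ Finset.univ.erase v₀, (max |f v| A) ^ p := by
    rw [← Finset.add_sum_erase _ _ (mem_univ v₀), max_eq_left hA]
  have hSsplit : S = |f v₀| ^ p + ∑ v ∈ Finset.univ.erase v₀, |f v| ^ p := by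
    rw [hS, ← Finset.add_sum_erase _ _ (mem_univ v₀)]
  have hAp : A ^ p ≤ S / (n:ℝ) ^ p := by
    rw [hAdef, Real.div_rpow hT0 hn0.le]
    apply div_le_div_of_nonneg_right _ (by positivity)
    exact mysum_rpow _ _ (fun _ _ => abs_nonneg _) hp0 hp1
  have hterm : ∀ v, (max |f v| A) ^ p ≤ |f v| ^ p + A ^ p := by
    intro v
    rcases max_cases |f v| A with ⟨he, -⟩ | ⟨he, -⟩ <;> rw [he]
    · exact le_add_of_nonneg_right (Real.rpow_nonneg hA0 p)
    · exact le_add_of_nonneg_left (Real.rpow_nonneg (abs_nonneg _) p)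
  have hcard : ((Finset.univ.erase v₀).card : ℝ) = (n : ℝ) - 1 := by
    rw [Finset.card_erase_of_mem (mem_univ v₀), Finset.card_univ, Fintype.card_fin]
    have : 1 ≤ n := by omega
    push_cast [Nat.cast_sub this]
    ring
  calc ∑ v, (max |f v| A) ^ p
      = |f v₀| ^ p + ∑ v ∈ Finset.univ.erase v₀, (max |f v| A) ^ p := hsplit
    _ ≤ |f v₀| ^ p + ∑ v ∈ Finset.univ.erase v₀, (|f v| ^ p + A ^ p) := by
        gcongr
        exact hterm _
    _ = |f v₀| ^ p + (∑ v ∈ Finset.univ.erase v₀, |f v| ^ p)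
          + ((n : ℝ) - 1) * A ^ p := by
        rw [Finset.sum_add_distrib, Finset.sum_const, nsmul_eq_mul, hcard]; ring
    _ = S + ((n : ℝ) - 1) * A ^ p := by rw [hSsplit]
    _ ≤ S + ((n : ℝ) - 1) * (S / (n : ℝ) ^ p) := by
        have h2 : (2:ℝ) ≤ n := by exact_mod_cast hn
        exact add_le_add (le_refl S) (mul_le_mul_of_nonneg_left hAp (by linarith))
    _ = (1 + ((n : ℝ) - 1) / (n : ℝ) ^ p) * S := by ring

theorem pNorm_maxOp_le (n : ℕ) (hn : 2 ≤ n) (f : Fin n → ℝ) (p : ℝ)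
    (hp0 : 0 < p) (hp1 : p ≤ 1) :
    pNorm p (maxOp (⊤ : SimpleGraph (Fin n)) f)
      ≤ (1 + ((n : ℝ) - 1) / (n : ℝ) ^ p) ^ (1 / p) * pNorm p f := by
  have hC : (0:ℝ) ≤ 1 + ((n : ℝ) - 1) / (n : ℝ) ^ p := by
    have h2 : (2:ℝ) ≤ n := by exact_mod_cast hn
    have : (0:ℝ) ≤ ((n : ℝ) - 1) / (n : ℝ) ^ p :=
      div_nonneg (by linarith) (Real.rpow_nonneg (by positivity) p)
    linarith
  have habs : ∀ v, |maxOp (⊤ : SimpleGraph (Fin n)) f v|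
      = max |f v| ((∑ w, |f w|) / n) := by
    intro v
    rw [maxOp_top n hn f v]
    exact abs_of_nonneg (le_trans (abs_nonneg _) (le_max_left _ _))
  rw [pNorm, pNorm]
  calc (∑ v, |maxOp (⊤ : SimpleGraph (Fin n)) f v| ^ p) ^ (1/p)
      = (∑ v, (max |f v| ((∑ w, |f w|) / n)) ^ p) ^ (1/p) := by
        congr 1; exact Finset.sum_congr rfl fun v _ => by rw [habs v]
    _ ≤ ((1 + ((n : ℝ) - 1) / (n : ℝ) ^ p) * ∑ v, |f v| ^ p) ^ (1/p) := by
        apply Real.rpow_le_rpow _ (key_sum n hn f p hp0 hp1) (by positivity)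
        exact Finset.sum_nonneg fun v _ =>
          Real.rpow_nonneg (le_trans (abs_nonneg _) (le_max_left _ _)) p
    _ = (1 + ((n : ℝ) - 1) / (n : ℝ) ^ p) ^ (1/p) * (∑ v, |f v| ^ p) ^ (1/p) := by
        rw [Real.mul_rpow hC (Finset.sum_nonneg fun v _ =>
          Real.rpow_nonneg (abs_nonneg _) p)]

theorem kdelta_abs (n : ℕ) (w : Fin n) [NeZero n] :
    |kdelta (0 : Fin n) w| = if w = 0 then 1 else 0 := by
  rw [kdelta]; split <;> simp

theorem kdelta_sum_abs (n : ℕ) [NeZero n] : ∑ w, |kdelta (0 : Fin n) w| = 1 := by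
  rw [Finset.sum_congr rfl fun w _ => kdelta_abs n w]
  simp

theorem pNorm_kdelta (n : ℕ) [NeZero n] (p : ℝ) (hp0 : 0 < p) :
    pNorm p (kdelta (0 : Fin n)) = 1 := by
  rw [pNorm]
  have : ∀ w : Fin n, |kdelta (0 : Fin n) w| ^ p = if w = 0 then 1 else 0 := by
    intro w
    rw [kdelta_abs n w]
    split
    · exact Real.one_rpow p
    · exact Real.zero_rpow hp0.ne'
  rw [Finset.sum_congr rfl fun w _ => this w]
  simp [Real.one_rpow]

/-- exact ℓ^p norm of the maximal operator of the complete graph,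
for 0 < p ≤ 1. -/
theorem stmt5 (n : ℕ) (hn : 2 ≤ n) (p : ℝ) (hp0 : 0 < p) (hp1 : p ≤ 1) :
    opNorm (⊤ : SimpleGraph (Fin n)) p
      = (1 + ((n : ℝ) - 1) / (n : ℝ) ^ p) ^ (1 / p) := by
  haveI : NeZero n := ⟨by omega⟩
  have hn0 : (0:ℝ) < n := by positivity
  set C : ℝ := 1 + ((n : ℝ) - 1) / (n : ℝ) ^ p with hCdef
  have h2n : (2:ℝ) ≤ n := by exact_mod_cast hn
  have hC : (0:ℝ) < C := by
    have : (0:ℝ) ≤ ((n : ℝ) - 1) / (n : ℝ) ^ p :=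
      div_nonneg (by linarith) (Real.rpow_nonneg (by positivity) p)
    rw [hCdef]; linarith
  -- the delta function
  have hδne : kdelta (0 : Fin n) ≠ 0 := by
    intro h
    have := congrFun h 0
    simp [kdelta] at this
  -- positivity of pNorm for nonzero f
  have hpos : ∀ f : Fin n → ℝ, f ≠ 0 → 0 < pNorm p f := by
    intro f hf
    have : ∃ v, f v ≠ 0 := by
      by_contra h
      push_neg at h
      exact hf (funext h)
    obtain ⟨v, hv⟩ := this
    rw [pNorm]
    apply Real.rpow_pos_of_pos
    apply Finset.sum_pos' (fun w _ => Real.rpow_nonneg (abs_nonneg _) p)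
    exact ⟨v, mem_univ v, Real.rpow_pos_of_pos (abs_pos.mpr hv) p⟩
  -- ratio bound
  have hratio : ∀ f : {f : Fin n → ℝ // f ≠ 0},
      pNorm p (maxOp (⊤ : SimpleGraph (Fin n)) f.1) / pNorm p f.1 ≤ C ^ (1/p) := by
    intro f
    rw [div_le_iff₀ (hpos f.1 f.2)]
    exact pNorm_maxOp_le n hn f.1 p hp0 hp1
  -- value at delta
  have hδ : pNorm p (maxOp (⊤ : SimpleGraph (Fin n)) (kdelta (0 : Fin n)))
      / pNorm p (kdelta (0 : Fin n)) = C ^ (1/p) := by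
    rw [pNorm_kdelta n p hp0, div_one, pNorm]
    have hmax : ∀ v : Fin n, |maxOp (⊤ : SimpleGraph (Fin n)) (kdelta (0 : Fin n)) v| ^ p
        = if v = 0 then 1 else 1 / (n:ℝ) ^ p := by
      intro v
      rw [maxOp_top n hn, kdelta_sum_abs n, kdelta_abs n v]
      split
      · rw [max_eq_left (by
          rw [div_le_one hn0]; linarith)]
        simp [Real.one_rpow]
      · rw [max_eq_right (by positivity), abs_of_nonneg (by positivity),
          Real.div_rpow zero_le_one hn0.le, Real.one_rpow]
    rw [Finset.sum_congr rfl fun v _ => hmax v]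
    have hrw : ∀ v : Fin n, (if v = 0 then (1:ℝ) else 1 / (n:ℝ) ^ p)
        = (if v = 0 then 1 - 1 / (n:ℝ) ^ p else 0) + 1 / (n:ℝ) ^ p := by
      intro v; split <;> ring
    rw [Finset.sum_congr rfl fun v _ => hrw v, Finset.sum_add_distrib,
      Finset.sum_ite_eq' Finset.univ (0 : Fin n)]
    simp only [mem_univ, if_true, Finset.sum_const, Finset.card_univ, Fintype.card_fin,
      nsmul_eq_mul]
    congr 1
    rw [hCdef]
    field_simp
    ring
  -- conclude
  rw [opNorm]
  haveI : Nonempty {f : Fin n → ℝ // f ≠ 0} := ⟨⟨kdelta (0 : Fin n), hδne⟩⟩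
  have hbdd : BddAbove (Set.range fun f : {f : Fin n → ℝ // f ≠ 0} =>
      pNorm p (maxOp (⊤ : SimpleGraph (Fin n)) f.1) / pNorm p f.1) := by
    refine ⟨C ^ (1/p), ?_⟩
    rintro x ⟨f, rfl⟩
    exact hratio f
  apply le_antisymm
  · exact ciSup_le hratio
  · calc C ^ (1/p)
        = pNorm p (maxOp (⊤ : SimpleGraph (Fin n)) (kdelta (0 : Fin n)))
          / pNorm p (kdelta (0 : Fin n)) := hδ.symm
      _ ≤ _ := le_ciSup hbdd ⟨kdelta (0 : Fin n), hδne⟩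
end
end

section
/- Let G be a finite simple connected graph with n vertices and let 0 < p ≤ 1. Then ‖M_G‖_p = (1 + (n-1)/n^p)^{1/p} if and only if G is the complete graph K_n (i.e., every two distinct vertices of G are adjacent). -/
open scoped Classical
open Finset

noncomputable section

variable {V : Type*} [Fintype V]

section AuxLemmas

lemma aux_mem_gBall {G : SimpleGraph V} {v w : V} {r : ℕ} :
    w ∈ gBall G v r ↔ G.dist v w ≤ r := by
  simp [gBall]

lemma aux_self_mem_gBall (G : SimpleGraph V) (v : V) (r : ℕ) : v ∈ gBall G v r := by
  simp [gBall, SimpleGraph.dist_self]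

lemma aux_gBall_card_pos (G : SimpleGraph V) (v : V) (r : ℕ) :
    (0:ℝ) < ((gBall G v r).card : ℝ) := by
  exact_mod_cast Finset.card_pos.2 ⟨v, aux_self_mem_gBall G v r⟩

lemma aux_gBall_card_le (G : SimpleGraph V) (v : V) (r : ℕ) :
    ((gBall G v r).card : ℝ) ≤ (Fintype.card V : ℝ) := by
  exact_mod_cast Finset.card_le_univ _

lemma aux_gBall_mono (G : SimpleGraph V) (v : V) {r s : ℕ} (h : r ≤ s) :
    gBall G v r ⊆ gBall G v s := fun w hw => aux_mem_gBall.2 ((aux_mem_gBall.1 hw).trans h)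

lemma aux_gBall_zero {G : SimpleGraph V} (hG : G.Connected) (v : V) :
    gBall G v 0 = {v} := by
  ext w
  simp only [aux_mem_gBall, Nat.le_zero, hG.dist_eq_zero_iff, Finset.mem_singleton, eq_comm]

lemma aux_term_nonneg (G : SimpleGraph V) (f : V → ℝ) (v : V) (k : ℕ) :
    0 ≤ (∑ w ∈ gBall G v k, |f w|) / ((gBall G v k).card : ℝ) :=
  div_nonneg (Finset.sum_nonneg fun _ _ => abs_nonneg _) (Nat.cast_nonneg _)

lemma aux_maxOp_nonneg (G : SimpleGraph V) (f : V → ℝ) (v : V) : 0 ≤ maxOp G f v :=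
  Real.iSup_nonneg fun k => aux_term_nonneg G f v k.1

lemma aux_le_maxOp (G : SimpleGraph V) (f : V → ℝ) (v : V) (k : Fin (Fintype.card V)) :
    (∑ w ∈ gBall G v k.1, |f w|) / ((gBall G v k.1).card : ℝ) ≤ maxOp G f v := by
  exact le_ciSup (f := fun k : Fin (Fintype.card V) =>
    (∑ w ∈ gBall G v k.1, |f w|) / ((gBall G v k.1).card : ℝ))
    (Set.Finite.bddAbove (Set.finite_range _)) k

lemma aux_dist_lt_card {G : SimpleGraph V} (hG : G.Connected) (v u : V) :
    G.dist v u < Fintype.card V := by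
  obtain ⟨w⟩ := hG.preconnected v u
  exact (SimpleGraph.dist_le w.bypass).trans_lt w.bypass_isPath.length_lt

lemma aux_maxOp_kdelta [Nonempty V] {G : SimpleGraph V} (hG : G.Connected) (u v : V) :
    maxOp G (kdelta u) v = 1 / ((gBall G v (G.dist v u)).card : ℝ) := by
  haveI : Nonempty (Fin (Fintype.card V)) := ⟨⟨0, Fintype.card_pos⟩⟩
  have habs : ∀ w, |kdelta u w| = if w = u then (1:ℝ) else 0 := by
    intro w; unfold kdelta; split <;> simp
  have hsum : ∀ k : ℕ, (∑ w ∈ gBall G v k, |kdelta u w|)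
      = if G.dist v u ≤ k then (1:ℝ) else 0 := by
    intro k
    rw [Finset.sum_congr rfl fun w _ => habs w, Finset.sum_ite_eq']
    simp [aux_mem_gBall]
  have hdlt := aux_dist_lt_card hG v u
  apply le_antisymm
  · refine ciSup_le fun k => ?_
    rw [hsum k.1]
    split
    · next h =>
      rw [div_le_div_iff₀ (aux_gBall_card_pos G v k.1) (aux_gBall_card_pos G v (G.dist v u))]
      have : ((gBall G v (G.dist v u)).card : ℝ) ≤ ((gBall G v k.1).card : ℝ) := by
        exact_mod_cast Finset.card_le_card (aux_gBall_mono G v h)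
      linarith
    · next h =>
      rw [zero_div]
      positivity
  · have h := aux_le_maxOp G (kdelta u) v ⟨G.dist v u, hdlt⟩
    rw [hsum (G.dist v u)] at h
    simpa using h

lemma aux_pNorm_nonneg (p : ℝ) (f : V → ℝ) : 0 ≤ pNorm p f :=
  Real.rpow_nonneg
    (Finset.sum_nonneg fun _ _ => Real.rpow_nonneg (abs_nonneg _) _) _

lemma aux_pNorm_kdelta {p : ℝ} (hp : p ≠ 0) (u : V) : pNorm p (kdelta u) = 1 := by
  unfold pNorm
  have habs : ∀ v : V, |kdelta u v| ^ p = if v = u then (1:ℝ) else 0 := by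
    intro v; unfold kdelta; split <;> simp [Real.zero_rpow hp]
  rw [Finset.sum_congr rfl fun v _ => habs v, Finset.sum_ite_eq']
  simp

lemma aux_pNorm_pos {p : ℝ} (hp : 0 < p) {f : V → ℝ} (hf : f ≠ 0) : 0 < pNorm p f := by
  obtain ⟨v, hv⟩ : ∃ v, f v ≠ 0 := by
    by_contra h; push_neg at h; exact hf (funext h)
  have hpos : 0 < ∑ w, |f w| ^ p :=
    Finset.sum_pos' (fun w _ => Real.rpow_nonneg (abs_nonneg _) _)
      ⟨v, Finset.mem_univ v, Real.rpow_pos_of_pos (abs_pos.2 hv) _⟩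
  exact Real.rpow_pos_of_pos hpos _

lemma aux_add_rpow {x y p : ℝ} (hx : 0 ≤ x) (hy : 0 ≤ y) (hp : 0 ≤ p) (hp1 : p ≤ 1) :
    (x + y) ^ p ≤ x ^ p + y ^ p := by
  have h := NNReal.rpow_add_le_add_rpow x.toNNReal y.toNNReal hp hp1
  rw [← NNReal.coe_le_coe] at h
  push_cast at h
  rwa [Real.coe_toNNReal _ hx, Real.coe_toNNReal _ hy] at h

lemma aux_sum_rpow {ι : Type*} {p : ℝ} (hp0 : 0 < p) (hp1 : p ≤ 1)
    (s : Finset ι) (g : ι → ℝ) (hg : ∀ i ∈ s, 0 ≤ g i) :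
    (∑ i ∈ s, g i) ^ p ≤ ∑ i ∈ s, g i ^ p := by
  classical
  revert hg
  induction s using Finset.cons_induction with
  | empty => intro _; simp [Real.zero_rpow hp0.ne']
  | cons a s ha ih =>
    intro hg
    rw [Finset.sum_cons, Finset.sum_cons]
    have h1 := aux_add_rpow (hg a (Finset.mem_cons_self a s))
      (Finset.sum_nonneg fun i hi => hg i (Finset.mem_cons_of_mem hi)) hp0.le hp1
    exact h1.trans (add_le_add le_rfl (ih fun i hi => hg i (Finset.mem_cons_of_mem hi)))

lemma aux_maxOp_le_sum [Nonempty V] (G : SimpleGraph V) (f : V → ℝ) (v : V) :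
    maxOp G f v ≤ ∑ w, |f w| := by
  haveI : Nonempty (Fin (Fintype.card V)) := ⟨⟨0, Fintype.card_pos⟩⟩
  refine ciSup_le fun k => ?_
  have h1 : (∑ w ∈ gBall G v k.1, |f w|) ≤ ∑ w, |f w| :=
    Finset.sum_le_sum_of_subset_of_nonneg (Finset.subset_univ _) fun _ _ _ => abs_nonneg _
  have h2 : (1:ℝ) ≤ ((gBall G v k.1).card : ℝ) := by
    exact_mod_cast Finset.card_pos.2 ⟨v, aux_self_mem_gBall G v k.1⟩
  calc (∑ w ∈ gBall G v k.1, |f w|) / ((gBall G v k.1).card : ℝ)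
      ≤ ∑ w ∈ gBall G v k.1, |f w| :=
        div_le_self (Finset.sum_nonneg fun _ _ => abs_nonneg _) h2
    _ ≤ _ := h1

lemma aux_pNorm_maxOp_le [Nonempty V] (G : SimpleGraph V) {p : ℝ} (hp0 : 0 < p) (hp1 : p ≤ 1)
    (f : V → ℝ) :
    pNorm p (maxOp G f) ≤ (Fintype.card V : ℝ) ^ (1/p) * pNorm p f := by
  have key : ∀ v, |maxOp G f v| ^ p ≤ ∑ w, |f w| ^ p := fun v => by
    rw [abs_of_nonneg (aux_maxOp_nonneg G f v)]
    calc maxOp G f v ^ p ≤ (∑ w, |f w|) ^ p :=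
          Real.rpow_le_rpow (aux_maxOp_nonneg G f v) (aux_maxOp_le_sum G f v) hp0.le
      _ ≤ ∑ w, |f w| ^ p := aux_sum_rpow hp0 hp1 _ _ fun w _ => abs_nonneg _
  have hsum : (∑ v, |maxOp G f v| ^ p) ≤ (Fintype.card V : ℝ) * ∑ w, |f w| ^ p := by
    calc ∑ v, |maxOp G f v| ^ p ≤ ∑ _v : V, ∑ w, |f w| ^ p :=
          Finset.sum_le_sum fun v _ => key v
      _ = (Fintype.card V : ℝ) * ∑ w, |f w| ^ p := by
          rw [Finset.sum_const, nsmul_eq_mul, Finset.card_univ]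
  unfold pNorm
  calc (∑ v, |maxOp G f v| ^ p) ^ (1/p)
      ≤ ((Fintype.card V : ℝ) * ∑ w, |f w| ^ p) ^ (1/p) :=
        Real.rpow_le_rpow
          (Finset.sum_nonneg fun _ _ => Real.rpow_nonneg (abs_nonneg _) _) hsum (by positivity)
    _ = _ := Real.mul_rpow (Nat.cast_nonneg _)
        (Finset.sum_nonneg fun _ _ => Real.rpow_nonneg (abs_nonneg _) _)

lemma aux_opNorm_bdd [Nonempty V] (G : SimpleGraph V) {p : ℝ} (hp0 : 0 < p) (hp1 : p ≤ 1) :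
    BddAbove (Set.range fun f : {f : V → ℝ // f ≠ 0} =>
      pNorm p (maxOp G f.1) / pNorm p f.1) := by
  refine ⟨(Fintype.card V : ℝ) ^ (1/p), ?_⟩
  rintro x ⟨f, rfl⟩
  rw [div_le_iff₀ (aux_pNorm_pos hp0 f.2)]
  exact aux_pNorm_maxOp_le G hp0 hp1 f.1

lemma aux_kdelta_ne_zero (u : V) : (kdelta u : V → ℝ) ≠ 0 := by
  intro h
  have := congrFun h u
  simp [kdelta] at this

lemma aux_sum_kdelta [Nonempty V] [DecidableEq V] {G : SimpleGraph V} (hG : G.Connected)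
    {p : ℝ} (u : V) :
    ∑ v, |maxOp G (kdelta u) v| ^ p
      = 1 + ∑ v ∈ Finset.univ.erase u, (1 / ((gBall G v (G.dist v u)).card : ℝ)) ^ p := by
  have habs : ∀ v, |maxOp G (kdelta u) v| ^ p
      = (1 / ((gBall G v (G.dist v u)).card : ℝ)) ^ p := by
    intro v
    rw [aux_maxOp_kdelta hG u v, abs_of_nonneg (by positivity)]
  rw [Finset.sum_congr rfl fun v _ => habs v,
    ← Finset.add_sum_erase _ _ (Finset.mem_univ u)]
  congr 1
  rw [SimpleGraph.dist_self, aux_gBall_zero hG u]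
  simp

lemma aux_gBall_top [Nonempty V] (v : V) {k : ℕ} (hk : 1 ≤ k) :
    gBall (⊤ : SimpleGraph V) v k = Finset.univ := by
  refine Finset.eq_univ_of_forall fun w => aux_mem_gBall.2 ?_
  rcases eq_or_ne v w with rfl | h
  · simp [SimpleGraph.dist_self]
  · rw [SimpleGraph.dist_top_of_ne h]; exact hk

lemma aux_top_upper {n : ℕ} (hn : 0 < n) {p : ℝ} (hp0 : 0 < p) (hp1 : p ≤ 1) (f : Fin n → ℝ) :
    ∑ v, |maxOp (⊤ : SimpleGraph (Fin n)) f v| ^ p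
      ≤ (1 + ((n:ℝ)-1)/(n:ℝ)^p) * ∑ v, |f v| ^ p := by
  haveI : Nonempty (Fin n) := Fin.pos_iff_nonempty.1 hn
  haveI : Nonempty (Fin (Fintype.card (Fin n))) := ⟨⟨0, Fintype.card_pos⟩⟩
  have hn1 : (1:ℝ) ≤ (n:ℝ) := by exact_mod_cast hn
  set A := (∑ w, |f w|) / (n : ℝ) with hA
  have hA0 : 0 ≤ A := div_nonneg (Finset.sum_nonneg fun _ _ => abs_nonneg _) (by positivity)
  have hM : ∀ v, maxOp (⊤ : SimpleGraph (Fin n)) f v ≤ max (|f v|) A := by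
    intro v
    refine ciSup_le fun k => ?_
    rcases Nat.eq_zero_or_pos k.1 with hk | hk
    · rw [hk, aux_gBall_zero SimpleGraph.connected_top v]
      simp
    · rw [aux_gBall_top v hk]
      have hcard : ((Finset.univ : Finset (Fin n)).card : ℝ) = (n:ℝ) := by simp
      rw [hcard, ← hA]
      exact le_max_right _ _
  obtain ⟨v₀, -, hv₀⟩ := Finset.exists_max_image Finset.univ (fun v => |f v|)
    ⟨Classical.arbitrary _, Finset.mem_univ _⟩
  have hAv₀ : A ≤ |f v₀| := by
    rw [hA, div_le_iff₀ (by positivity)]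
    calc ∑ w, |f w| ≤ ∑ _w : Fin n, |f v₀| :=
          Finset.sum_le_sum fun w _ => hv₀ w (Finset.mem_univ w)
      _ = |f v₀| * (n:ℝ) := by
          rw [Finset.sum_const, nsmul_eq_mul, Finset.card_univ, Fintype.card_fin, mul_comm]
  have key : ∀ v, |maxOp (⊤ : SimpleGraph (Fin n)) f v| ^ p ≤ max (|f v|) A ^ p := fun v => by
    rw [abs_of_nonneg (aux_maxOp_nonneg _ f v)]
    exact Real.rpow_le_rpow (aux_maxOp_nonneg _ f v) (hM v) hp0.le
  have hApT : A ^ p ≤ (∑ w, |f w| ^ p) / (n:ℝ)^p := by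
    rw [hA, Real.div_rpow (Finset.sum_nonneg fun _ _ => abs_nonneg _) (by positivity)]
    gcongr
    exact aux_sum_rpow hp0 hp1 _ _ fun w _ => abs_nonneg _
  have h2 : ∀ v ∈ Finset.univ.erase v₀, max (|f v|) A ^ p ≤ |f v| ^ p + A ^ p := by
    intro v _
    rcases max_cases (|f v|) A with ⟨h, -⟩ | ⟨h, -⟩ <;> rw [h]
    · exact le_add_of_nonneg_right (Real.rpow_nonneg hA0 _)
    · exact le_add_of_nonneg_left (Real.rpow_nonneg (abs_nonneg _) _)
  have hcarde : ((Finset.univ.erase v₀).card : ℝ) = (n:ℝ) - 1 := by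
    rw [Finset.card_erase_of_mem (Finset.mem_univ _), Finset.card_univ, Fintype.card_fin,
      Nat.cast_sub hn, Nat.cast_one]
  calc ∑ v, |maxOp (⊤ : SimpleGraph (Fin n)) f v| ^ p
      ≤ ∑ v, max (|f v|) A ^ p := Finset.sum_le_sum fun v _ => key v
    _ = |f v₀| ^ p + ∑ v ∈ Finset.univ.erase v₀, max (|f v|) A ^ p := by
        rw [← Finset.add_sum_erase _ _ (Finset.mem_univ v₀), max_eq_left hAv₀]
    _ ≤ |f v₀| ^ p + ∑ v ∈ Finset.univ.erase v₀, (|f v| ^ p + A ^ p) :=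
        add_le_add le_rfl (Finset.sum_le_sum h2)
    _ = (|f v₀| ^ p + ∑ v ∈ Finset.univ.erase v₀, |f v| ^ p) + ((n:ℝ)-1) * A ^ p := by
        rw [Finset.sum_add_distrib, Finset.sum_const, nsmul_eq_mul, hcarde]; ring
    _ = (∑ v, |f v| ^ p) + ((n:ℝ)-1) * A ^ p := by
        rw [Finset.add_sum_erase Finset.univ (fun v => |f v| ^ p) (Finset.mem_univ v₀)]
    _ ≤ (∑ v, |f v| ^ p) + ((n:ℝ)-1) * ((∑ w, |f w| ^ p) / (n:ℝ)^p) := by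
        have : (0:ℝ) ≤ (n:ℝ) - 1 := by linarith
        nlinarith [hApT, this, mul_le_mul_of_nonneg_left hApT this]
    _ = (1 + ((n:ℝ)-1)/(n:ℝ)^p) * ∑ v, |f v| ^ p := by ring

lemma aux_rpow_inv {x p : ℝ} (hx : 0 ≤ x) (hp : p ≠ 0) : (x ^ (1/p)) ^ p = x := by
  rw [← Real.rpow_mul hx, one_div, inv_mul_cancel₀ hp, Real.rpow_one]

lemma aux_opNorm_top {n : ℕ} (hn : 0 < n) {p : ℝ} (hp0 : 0 < p) (hp1 : p ≤ 1) :
    opNorm (⊤ : SimpleGraph (Fin n)) p = (1 + ((n:ℝ)-1)/(n:ℝ)^p) ^ (1/p) := by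
  haveI : Nonempty (Fin n) := Fin.pos_iff_nonempty.1 hn
  have hn1 : (1:ℝ) ≤ (n:ℝ) := by exact_mod_cast hn
  have hc : (0:ℝ) ≤ 1 + ((n:ℝ)-1)/(n:ℝ)^p := by
    have h1 : (0:ℝ) ≤ ((n:ℝ)-1)/(n:ℝ)^p := by
      apply div_nonneg (by linarith) (by positivity)
    linarith
  have hδval : pNorm p (maxOp (⊤ : SimpleGraph (Fin n)) (kdelta (Classical.arbitrary (Fin n))))
      = (1 + ((n:ℝ)-1)/(n:ℝ)^p) ^ (1/p) := by
    set u := Classical.arbitrary (Fin n)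
    unfold pNorm
    rw [aux_sum_kdelta SimpleGraph.connected_top u]
    congr 2
    have hterm : ∀ v ∈ Finset.univ.erase u,
        (1 / ((gBall (⊤ : SimpleGraph (Fin n)) v (SimpleGraph.dist ⊤ v u)).card : ℝ)) ^ p
          = 1 / (n:ℝ)^p := by
      intro v hv
      have hne : v ≠ u := Finset.ne_of_mem_erase hv
      rw [SimpleGraph.dist_top_of_ne hne, aux_gBall_top v (le_refl 1)]
      rw [Finset.card_univ, Fintype.card_fin, one_div,
        Real.inv_rpow (by positivity), one_div]
    rw [Finset.sum_congr rfl hterm, Finset.sum_const, nsmul_eq_mul,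
      Finset.card_erase_of_mem (Finset.mem_univ _), Finset.card_univ, Fintype.card_fin,
      Nat.cast_sub hn, Nat.cast_one]
    ring
  haveI : Nonempty {f : Fin n → ℝ // f ≠ 0} :=
    ⟨⟨kdelta (Classical.arbitrary (Fin n)), aux_kdelta_ne_zero _⟩⟩
  apply le_antisymm
  · refine ciSup_le fun f => ?_
    rw [div_le_iff₀ (aux_pNorm_pos hp0 f.2)]
    calc pNorm p (maxOp (⊤ : SimpleGraph (Fin n)) f.1)
        = (∑ v, |maxOp (⊤ : SimpleGraph (Fin n)) f.1 v| ^ p) ^ (1/p) := rfl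
      _ ≤ ((1 + ((n:ℝ)-1)/(n:ℝ)^p) * ∑ v, |f.1 v| ^ p) ^ (1/p) :=
          Real.rpow_le_rpow
            (Finset.sum_nonneg fun _ _ => Real.rpow_nonneg (abs_nonneg _) _)
            (aux_top_upper hn hp0 hp1 f.1) (by positivity)
      _ = (1 + ((n:ℝ)-1)/(n:ℝ)^p) ^ (1/p) * pNorm p f.1 := by
          rw [Real.mul_rpow hc
            (Finset.sum_nonneg fun _ _ => Real.rpow_nonneg (abs_nonneg _) _)]
          rfl
  · have hb := aux_opNorm_bdd (⊤ : SimpleGraph (Fin n)) hp0 hp1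
    have h := le_ciSup hb (⟨kdelta (Classical.arbitrary (Fin n)),
      aux_kdelta_ne_zero _⟩ : {f : Fin n → ℝ // f ≠ 0})
    rw [aux_pNorm_kdelta hp0.ne', div_one, hδval] at h
    exact h

end AuxLemmas

/-- the lower bound is attained exactly by the complete graph. -/
theorem stmt9 (n : ℕ) (G : SimpleGraph (Fin n)) (hG : G.Connected)
    (p : ℝ) (hp0 : 0 < p) (hp1 : p ≤ 1) :
    opNorm G p = (1 + ((n : ℝ) - 1) / (n : ℝ) ^ p) ^ (1 / p)
      ↔ G = (⊤ : SimpleGraph (Fin n)) := by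
  haveI hne : Nonempty (Fin n) := hG.nonempty
  have hn : 0 < n := Fin.pos_iff_nonempty.2 hne
  have hn1 : (1:ℝ) ≤ (n:ℝ) := by exact_mod_cast hn
  constructor
  · intro h
    -- the key claim: all the relevant balls are full
    have claim : ∀ u v : Fin n, v ≠ u → ((gBall G v (G.dist v u)).card : ℝ) = (n:ℝ) := by
      intro u
      have hb := aux_opNorm_bdd G hp0 hp1
      have hratio : pNorm p (maxOp G (kdelta u)) / pNorm p (kdelta u) ≤ opNorm G p :=
        le_ciSup hb (⟨kdelta u, aux_kdelta_ne_zero u⟩ : {f : Fin n → ℝ // f ≠ 0})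
      rw [h, aux_pNorm_kdelta hp0.ne', div_one] at hratio
      have hsum : ∑ v, |maxOp G (kdelta u) v| ^ p ≤ 1 + ((n:ℝ)-1)/(n:ℝ)^p := by
        have h3 := Real.rpow_le_rpow (aux_pNorm_nonneg p (maxOp G (kdelta u))) hratio hp0.le
        have hc : (0:ℝ) ≤ 1 + ((n:ℝ)-1)/(n:ℝ)^p := by
          have : (0:ℝ) ≤ ((n:ℝ)-1)/(n:ℝ)^p := div_nonneg (by linarith) (by positivity)
          linarith
        rwa [show pNorm p (maxOp G (kdelta u))
            = (∑ v, |maxOp G (kdelta u) v| ^ p) ^ (1/p) from rfl,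
          aux_rpow_inv (Finset.sum_nonneg fun _ _ => Real.rpow_nonneg (abs_nonneg _) _)
            hp0.ne', aux_rpow_inv hc hp0.ne'] at h3
      rw [aux_sum_kdelta hG u] at hsum
      have hsum2 : ∑ v ∈ Finset.univ.erase u,
          (1 / ((gBall G v (G.dist v u)).card : ℝ)) ^ p ≤ ((n:ℝ)-1)/(n:ℝ)^p := by
        linarith
      have hconst : ∑ _v ∈ Finset.univ.erase u, ((1:ℝ)/(n:ℝ)) ^ p = ((n:ℝ)-1)/(n:ℝ)^p := by
        rw [Finset.sum_const, nsmul_eq_mul, Finset.card_erase_of_mem (Finset.mem_univ _),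
          Finset.card_univ, Fintype.card_fin, Nat.cast_sub hn, Nat.cast_one, one_div,
          Real.inv_rpow (by positivity)]
        ring
      have hptwise : ∀ v ∈ Finset.univ.erase u,
          ((1:ℝ)/(n:ℝ)) ^ p ≤ (1 / ((gBall G v (G.dist v u)).card : ℝ)) ^ p := by
        intro v _
        apply Real.rpow_le_rpow (by positivity) _ hp0.le
        apply one_div_le_one_div_of_le (aux_gBall_card_pos G v _)
        calc ((gBall G v (G.dist v u)).card : ℝ) ≤ (Fintype.card (Fin n) : ℝ) :=
              aux_gBall_card_le G v _
          _ = (n:ℝ) := by rw [Fintype.card_fin]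
      have hsumeq : ∑ _v ∈ Finset.univ.erase u, ((1:ℝ)/(n:ℝ)) ^ p
          = ∑ v ∈ Finset.univ.erase u, (1 / ((gBall G v (G.dist v u)).card : ℝ)) ^ p := by
        apply le_antisymm (Finset.sum_le_sum hptwise)
        rw [hconst]; exact hsum2
      have heach := (Finset.sum_eq_sum_iff_of_le hptwise).1 hsumeq
      intro v hv
      have hv' : v ∈ Finset.univ.erase u := Finset.mem_erase.2 ⟨hv, Finset.mem_univ v⟩
      have heq := heach v hv'
      have hle : (1:ℝ)/(n:ℝ) ≤ 1 / ((gBall G v (G.dist v u)).card : ℝ) := by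
        apply one_div_le_one_div_of_le (aux_gBall_card_pos G v _)
        calc ((gBall G v (G.dist v u)).card : ℝ) ≤ (Fintype.card (Fin n) : ℝ) :=
              aux_gBall_card_le G v _
          _ = (n:ℝ) := by rw [Fintype.card_fin]
      have hdiv : (1:ℝ)/(n:ℝ) = 1 / ((gBall G v (G.dist v u)).card : ℝ) := by
        by_contra hnc
        exact absurd heq (ne_of_lt (Real.rpow_lt_rpow (by positivity)
          (lt_of_le_of_ne hle hnc) hp0))
      rw [one_div, one_div] at hdiv
      have := inv_injective hdiv
      linarith [this.symm]
    -- every endpoint of an edge is adjacent to everything else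
    have step : ∀ x y : Fin n, G.Adj x y → ∀ z : Fin n, z ≠ y → G.Adj y z := by
      intro x y hxy z hz
      have hd : G.dist y x = 1 := SimpleGraph.dist_eq_one_iff_adj.2 hxy.symm
      have hcard : ((gBall G y (G.dist y x)).card : ℝ) = (n:ℝ) := claim x y hxy.ne'
      have hcard' : (gBall G y 1).card = Fintype.card (Fin n) := by
        rw [Fintype.card_fin, ← hd]
        exact_mod_cast hcard
      have huniv : gBall G y 1 = Finset.univ := Finset.eq_univ_of_card _ hcard'
      have hdz : G.dist y z ≤ 1 := aux_mem_gBall.1 (huniv ▸ Finset.mem_univ z)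
      have hdz0 : G.dist y z ≠ 0 := fun h0 => hz (hG.dist_eq_zero_iff.1 h0).symm
      have hdz1 : G.dist y z = 1 := le_antisymm hdz (Nat.one_le_iff_ne_zero.2 hdz0)
      exact SimpleGraph.dist_eq_one_iff_adj.1 hdz1
    ext v w
    simp only [SimpleGraph.top_adj]
    constructor
    · exact fun hvw => hvw.ne
    · intro hvw
      obtain ⟨q⟩ := hG.preconnected v w
      have h1 : G.Adj v (q.getVert 1) :=
        q.adj_snd (SimpleGraph.Walk.not_nil_of_ne hvw)
      have h2 : G.Adj (q.getVert 1) v := step v (q.getVert 1) h1 v h1.ne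
      have h3 : G.Adj v w := step (q.getVert 1) v h2 w (Ne.symm hvw)
      exact h3
  · intro h
    rw [h]
    exact aux_opNorm_top hn hp0 hp1
end
end

section
/- Let G be a finite simple connected graph with n vertices and let 0 < p ≤ 1. Then ‖M_G‖_p = (1 + (n-1)/2^p)^{1/p} if and only if G is isomorphic to the star graph S_n. -/
open scoped Classical
open Finset

noncomputable section

variable {V : Type*} [Fintype V]

namespace Stmt10Aux

open scoped NNReal

variable {G : SimpleGraph V} {p : ℝ}

lemma mem_gBall {v w : V} {r : ℕ} : w ∈ gBall G v r ↔ G.dist v w ≤ r := by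
  simp [gBall]

lemma self_mem_gBall (v : V) (r : ℕ) : v ∈ gBall G v r :=
  mem_gBall.2 (by rw [SimpleGraph.dist_self]; exact Nat.zero_le r)

lemma gBall_card_pos (v : V) (r : ℕ) : 0 < ((gBall G v r).card : ℝ) := by
  exact_mod_cast Finset.card_pos.2 ⟨v, self_mem_gBall v r⟩

lemma gBall_mono (v : V) {r s : ℕ} (h : r ≤ s) : gBall G v r ⊆ gBall G v s := by
  intro w hw
  exact mem_gBall.2 ((mem_gBall.1 hw).trans h)

lemma dist_lt_card (v w : V) : G.dist v w < Fintype.card V := by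
  rcases eq_or_ne (G.dist v w) 0 with h | h
  · rw [h]; exact Fintype.card_pos_iff.2 ⟨v⟩
  · obtain ⟨q, hq⟩ := SimpleGraph.exists_walk_of_dist_ne_zero h
    calc G.dist v w ≤ q.bypass.length := SimpleGraph.dist_le _
      _ < _ := q.bypass_isPath.length_lt

/-- average of `|f|` over the ball of radius `k` -/
def avg (G : SimpleGraph V) (f : V → ℝ) (v : V) (k : ℕ) : ℝ :=
  (∑ w ∈ gBall G v k, |f w|) / ((gBall G v k).card : ℝ)

lemma avg_nonneg (f : V → ℝ) (v : V) (k : ℕ) : 0 ≤ avg G f v k :=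
  div_nonneg (Finset.sum_nonneg fun _ _ => abs_nonneg _) (Nat.cast_nonneg _)

lemma maxOp_eq_sup (f : V → ℝ) (v : V) :
    maxOp G f v = ⨆ k : Fin (Fintype.card V), avg G f v k.1 := rfl

lemma avg_le_maxOp (f : V → ℝ) (v : V) (k : Fin (Fintype.card V)) :
    avg G f v k.1 ≤ maxOp G f v :=
  le_ciSup (f := fun k : Fin (Fintype.card V) => avg G f v k.1)
    (Set.Finite.bddAbove (Set.finite_range _)) k

lemma maxOp_le [Nonempty V] {f : V → ℝ} {v : V} {C : ℝ}
    (h : ∀ k : Fin (Fintype.card V), avg G f v k.1 ≤ C) : maxOp G f v ≤ C := by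
  haveI : Nonempty (Fin (Fintype.card V)) := ⟨⟨0, Fintype.card_pos⟩⟩
  exact ciSup_le h

lemma maxOp_nonneg [Nonempty V] (f : V → ℝ) (v : V) : 0 ≤ maxOp G f v := by
  haveI : Nonempty (Fin (Fintype.card V)) := ⟨⟨0, Fintype.card_pos⟩⟩
  exact le_trans (avg_nonneg f v (Classical.arbitrary (Fin (Fintype.card V))).1)
    (avg_le_maxOp f v _)

lemma avg_kdelta (v0 v : V) (k : ℕ) :
    avg G (kdelta v0) v k
      = (if v0 ∈ gBall G v k then 1 else 0) / ((gBall G v k).card : ℝ) := by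
  unfold avg kdelta
  congr 1
  rw [show (∑ w ∈ gBall G v k, |if w = v0 then (1:ℝ) else 0|)
      = ∑ w ∈ gBall G v k, (if w = v0 then (1:ℝ) else 0) from
    Finset.sum_congr rfl (by intro w _; split <;> simp)]
  simp [Finset.sum_ite_eq']

lemma maxOp_kdelta (v0 v : V) :
    maxOp G (kdelta v0) v = ((gBall G v (G.dist v v0)).card : ℝ)⁻¹ := by
  haveI : Nonempty V := ⟨v⟩
  apply le_antisymm
  · apply maxOp_le
    intro k
    rw [avg_kdelta]
    split_ifs with h
    · rw [one_div]
      apply inv_anti₀ (gBall_card_pos v (G.dist v v0))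
      exact_mod_cast Finset.card_le_card (gBall_mono v (mem_gBall.1 h))
    · rw [zero_div]
      exact inv_nonneg.2 (Nat.cast_nonneg _)
  · have hk : G.dist v v0 < Fintype.card V := dist_lt_card v v0
    have := avg_le_maxOp (G := G) (kdelta v0) v ⟨G.dist v v0, hk⟩
    rwa [avg_kdelta, if_pos (mem_gBall.2 le_rfl), one_div] at this

end Stmt10Aux

namespace Stmt10Aux

open scoped NNReal

variable {G : SimpleGraph V} {p : ℝ}

/-- `∑_v (1/|B(v, d(v,v0))|)^p` -/
def Nfun (G : SimpleGraph V) (p : ℝ) (v0 : V) : ℝ :=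
  ∑ v, (((gBall G v (G.dist v v0)).card : ℝ)⁻¹) ^ p

lemma Nfun_nonneg (v0 : V) : 0 ≤ Nfun G p v0 :=
  Finset.sum_nonneg fun v _ => Real.rpow_nonneg (inv_nonneg.2 (Nat.cast_nonneg _)) _

lemma kdelta_ne_zero (v0 : V) : kdelta v0 ≠ (0 : V → ℝ) := by
  intro h
  have := congrFun h v0
  simp [kdelta] at this

lemma pNorm_nonneg (f : V → ℝ) : 0 ≤ pNorm p f :=
  Real.rpow_nonneg (Finset.sum_nonneg fun v _ => Real.rpow_nonneg (abs_nonneg _) _) _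

lemma pNorm_pos (hp0 : 0 < p) {f : V → ℝ} (hf : f ≠ 0) : 0 < pNorm p f := by
  apply Real.rpow_pos_of_pos
  obtain ⟨v, hv⟩ := Function.ne_iff.1 hf
  refine Finset.sum_pos' (fun w _ => Real.rpow_nonneg (abs_nonneg _) _) ⟨v, Finset.mem_univ v, ?_⟩
  exact Real.rpow_pos_of_pos (abs_pos.2 hv) _

lemma pNorm_kdelta (hp0 : 0 < p) (v0 : V) : pNorm p (kdelta v0) = 1 := by
  unfold pNorm kdelta
  rw [show (∑ v, |if v = v0 then (1:ℝ) else 0| ^ p) = ∑ v, (if v = v0 then (1:ℝ) else 0) from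
    Finset.sum_congr rfl (by
      intro v _
      split <;> simp [Real.zero_rpow hp0.ne'])]
  simp [Finset.sum_ite_eq']

lemma pNorm_maxOp_kdelta (v0 : V) :
    pNorm p (maxOp G (kdelta v0)) = (Nfun G p v0) ^ (1 / p) := by
  unfold pNorm Nfun
  congr 1
  refine Finset.sum_congr rfl fun v _ => ?_
  rw [maxOp_kdelta, abs_of_nonneg (inv_nonneg.2 (Nat.cast_nonneg _))]

lemma real_rpow_add_le (hp0 : 0 < p) (hp1 : p ≤ 1) {x y : ℝ} (hx : 0 ≤ x) (hy : 0 ≤ y) :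
    (x + y) ^ p ≤ x ^ p + y ^ p := by
  have h := NNReal.rpow_add_le_add_rpow x.toNNReal y.toNNReal hp0.le hp1
  have hc : ((x.toNNReal + y.toNNReal : ℝ≥0) : ℝ) = x + y := by
    push_cast [Real.coe_toNNReal _ hx, Real.coe_toNNReal _ hy]; ring
  calc (x + y) ^ p = (((x.toNNReal + y.toNNReal : ℝ≥0) : ℝ)) ^ p := by rw [hc]
    _ = (((x.toNNReal + y.toNNReal) ^ p : ℝ≥0) : ℝ) := by
        rw [NNReal.coe_rpow]
    _ ≤ ((x.toNNReal ^ p + y.toNNReal ^ p : ℝ≥0) : ℝ) := by exact_mod_cast h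
    _ = x ^ p + y ^ p := by
        push_cast [NNReal.coe_rpow, Real.coe_toNNReal _ hx, Real.coe_toNNReal _ hy]; ring

lemma rpow_sum_le {ι : Type*} (hp0 : 0 < p) (hp1 : p ≤ 1) (s : Finset ι) (a : ι → ℝ)
    (ha : ∀ i ∈ s, 0 ≤ a i) : (∑ i ∈ s, a i) ^ p ≤ ∑ i ∈ s, a i ^ p := by
  induction s using Finset.cons_induction with
  | empty => simp [Real.zero_rpow hp0.ne']
  | cons i s hi ih =>
    rw [Finset.sum_cons, Finset.sum_cons]
    have h1 : 0 ≤ a i := ha i (Finset.mem_cons_self i s)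
    have h2 : ∀ j ∈ s, 0 ≤ a j := fun j hj => ha j (Finset.mem_cons.2 (Or.inr hj))
    calc (a i + ∑ j ∈ s, a j) ^ p ≤ a i ^ p + (∑ j ∈ s, a j) ^ p :=
          real_rpow_add_le hp0 hp1 h1 (Finset.sum_nonneg h2)
      _ ≤ _ := add_le_add_right (ih h2) _

lemma maxOp_le_sum_kdelta (f : V → ℝ) (v : V) :
    maxOp G f v ≤ ∑ v0, |f v0| * maxOp G (kdelta v0) v := by
  haveI : Nonempty V := ⟨v⟩
  apply maxOp_le
  intro k
  have hexp : avg G f v k.1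
      = ∑ v0, (if v0 ∈ gBall G v k.1 then |f v0| else 0) / ((gBall G v k.1).card : ℝ) := by
    unfold avg
    rw [← Finset.sum_div]
    congr 1
    rw [Finset.sum_ite_mem, Finset.univ_inter]
  rw [hexp]
  apply Finset.sum_le_sum
  intro v0 _
  have hle : (if v0 ∈ gBall G v k.1 then (1:ℝ) else 0) / ((gBall G v k.1).card : ℝ)
      ≤ maxOp G (kdelta v0) v := by
    rw [← avg_kdelta]; exact avg_le_maxOp _ _ k
  calc (if v0 ∈ gBall G v k.1 then |f v0| else 0) / ((gBall G v k.1).card : ℝ)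
      = |f v0| * ((if v0 ∈ gBall G v k.1 then (1:ℝ) else 0) / ((gBall G v k.1).card : ℝ)) := by
        split_ifs <;> simp [div_eq_mul_inv]
    _ ≤ |f v0| * maxOp G (kdelta v0) v :=
        mul_le_mul_of_nonneg_left hle (abs_nonneg _)

lemma sum_maxOp_rpow_le [Nonempty V] (hp0 : 0 < p) (hp1 : p ≤ 1) (f : V → ℝ) {C : ℝ}
    (hC : ∀ v0 : V, Nfun G p v0 ≤ C) :
    ∑ v, (maxOp G f v) ^ p ≤ C * ∑ v, |f v| ^ p := by
  have step1 : ∀ v, (maxOp G f v) ^ p ≤ ∑ v0, |f v0| ^ p * (maxOp G (kdelta v0) v) ^ p := by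
    intro v
    calc (maxOp G f v) ^ p ≤ (∑ v0, |f v0| * maxOp G (kdelta v0) v) ^ p :=
          Real.rpow_le_rpow (maxOp_nonneg f v) (maxOp_le_sum_kdelta f v) hp0.le
      _ ≤ ∑ v0, (|f v0| * maxOp G (kdelta v0) v) ^ p :=
          rpow_sum_le hp0 hp1 Finset.univ
            (fun v0 => |f v0| * maxOp G (kdelta v0) v)
            (fun v0 _ => mul_nonneg (abs_nonneg _) (maxOp_nonneg _ v))
      _ = ∑ v0, |f v0| ^ p * (maxOp G (kdelta v0) v) ^ p :=
          Finset.sum_congr rfl fun v0 _ =>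
            Real.mul_rpow (abs_nonneg _) (maxOp_nonneg _ v)
  calc ∑ v, (maxOp G f v) ^ p
      ≤ ∑ v, ∑ v0, |f v0| ^ p * (maxOp G (kdelta v0) v) ^ p :=
        Finset.sum_le_sum fun v _ => step1 v
    _ = ∑ v0, |f v0| ^ p * ∑ v, (maxOp G (kdelta v0) v) ^ p := by
        rw [Finset.sum_comm]
        exact Finset.sum_congr rfl fun v0 _ => (Finset.mul_sum _ _ _).symm
    _ = ∑ v0, |f v0| ^ p * Nfun G p v0 := by
        refine Finset.sum_congr rfl fun v0 _ => ?_
        congr 1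
        unfold Nfun
        exact Finset.sum_congr rfl fun v _ => by rw [maxOp_kdelta]
    _ ≤ ∑ v0, |f v0| ^ p * C :=
        Finset.sum_le_sum fun v0 _ =>
          mul_le_mul_of_nonneg_left (hC v0) (Real.rpow_nonneg (abs_nonneg _) _)
    _ = C * ∑ v, |f v| ^ p := by rw [← Finset.sum_mul, mul_comm]

lemma pNorm_maxOp_le [Nonempty V] (hp0 : 0 < p) (hp1 : p ≤ 1) (f : V → ℝ) {C : ℝ}
    (hC : ∀ v0 : V, Nfun G p v0 ≤ C) :
    pNorm p (maxOp G f) ≤ C ^ (1 / p) * pNorm p f := by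
  have hC0 : 0 ≤ C := le_trans (Nfun_nonneg (Classical.arbitrary V)) (hC _)
  unfold pNorm
  have h1 : (∑ v, |maxOp G f v| ^ p) = ∑ v, (maxOp G f v) ^ p :=
    Finset.sum_congr rfl fun v _ => by rw [abs_of_nonneg (maxOp_nonneg f v)]
  rw [h1, ← Real.mul_rpow hC0 (Finset.sum_nonneg fun v _ => Real.rpow_nonneg (abs_nonneg _) _)]
  exact Real.rpow_le_rpow (Finset.sum_nonneg fun v _ => Real.rpow_nonneg (maxOp_nonneg f v) _)
    (sum_maxOp_rpow_le hp0 hp1 f hC) (by positivity)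

end Stmt10Aux

namespace Stmt10Aux

open scoped NNReal

variable {G : SimpleGraph V} {p : ℝ}

lemma gBall_self_zero (hG : G.Connected) (v0 : V) :
    gBall G v0 (G.dist v0 v0) = {v0} := by
  ext w
  rw [mem_gBall, SimpleGraph.dist_self, Nat.le_zero, hG.dist_eq_zero_iff,
    Finset.mem_singleton, eq_comm]

lemma pair_subset_gBall (v0 v : V) :
    ({v, v0} : Finset V) ⊆ gBall G v (G.dist v v0) := by
  intro w hw
  rcases Finset.mem_insert.1 hw with h | h
  · subst h; exact self_mem_gBall _ _
  · rw [Finset.mem_singleton] at h; subst h; exact mem_gBall.2 le_rfl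

lemma card_pair' {v v0 : V} (hne : v ≠ v0) : ({v, v0} : Finset V).card = 2 := by
  rw [Finset.card_insert_of_notMem (by simp [hne]), Finset.card_singleton]

lemma two_le_card_gBall (v0 v : V) (hne : v ≠ v0) :
    2 ≤ (gBall G v (G.dist v v0)).card := by
  calc 2 = ({v, v0} : Finset V).card := (card_pair' hne).symm
    _ ≤ _ := Finset.card_le_card (pair_subset_gBall v0 v)

lemma term_le (hp0 : 0 < p) (v0 v : V) (hne : v ≠ v0) :
    (((gBall G v (G.dist v v0)).card : ℝ)⁻¹) ^ p ≤ ((2:ℝ)⁻¹) ^ p := by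
  apply Real.rpow_le_rpow (inv_nonneg.2 (Nat.cast_nonneg _)) _ hp0.le
  apply inv_anti₀ (by norm_num)
  exact_mod_cast two_le_card_gBall v0 v hne

lemma inv_two_rpow : ((2:ℝ)⁻¹) ^ p = 1 / 2 ^ p := by
  rw [Real.inv_rpow (by norm_num : (0:ℝ) ≤ 2), one_div]

lemma card_erase_cast [Nonempty V] (v0 : V) :
    (((Finset.univ : Finset V).erase v0).card : ℝ) = (Fintype.card V : ℝ) - 1 := by
  rw [Finset.card_erase_of_mem (Finset.mem_univ _), Finset.card_univ,
    Nat.cast_sub Fintype.card_pos, Nat.cast_one]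

lemma Nfun_le (hG : G.Connected) (hp0 : 0 < p) (v0 : V) :
    Nfun G p v0 ≤ 1 + ((Fintype.card V : ℝ) - 1) / 2 ^ p := by
  haveI : Nonempty V := ⟨v0⟩
  unfold Nfun
  rw [← Finset.add_sum_erase _ _ (Finset.mem_univ v0)]
  apply add_le_add
  · rw [gBall_self_zero hG]; simp
  · calc ∑ v ∈ Finset.univ.erase v0, (((gBall G v (G.dist v v0)).card : ℝ)⁻¹) ^ p
        ≤ ∑ _v ∈ Finset.univ.erase v0, ((2:ℝ)⁻¹) ^ p :=
          Finset.sum_le_sum fun v hv => term_le hp0 v0 v (Finset.ne_of_mem_erase hv)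
      _ = ((Fintype.card V : ℝ) - 1) / 2 ^ p := by
          rw [Finset.sum_const, nsmul_eq_mul, card_erase_cast, inv_two_rpow,
            div_eq_mul_inv, div_eq_mul_inv, one_mul]

lemma rpow_rpow_inv (hp0 : 0 < p) {x : ℝ} (hx : 0 ≤ x) : (x ^ p) ^ (1/p) = x := by
  rw [← Real.rpow_mul hx, mul_one_div_cancel hp0.ne', Real.rpow_one]

lemma rpow_rpow_inv' (hp0 : 0 < p) {x : ℝ} (hx : 0 ≤ x) : (x ^ p) ^ p⁻¹ = x := by
  rw [← Real.rpow_mul hx, mul_inv_cancel₀ hp0.ne', Real.rpow_one]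

lemma rpow_inv_rpow (hp0 : 0 < p) {x : ℝ} (hx : 0 ≤ x) : (x ^ (1/p)) ^ p = x := by
  rw [← Real.rpow_mul hx, one_div, inv_mul_cancel₀ hp0.ne', Real.rpow_one]

lemma star_structure (hG : G.Connected) (hp0 : 0 < p) (v0 : V)
    (h : Nfun G p v0 = 1 + ((Fintype.card V : ℝ) - 1) / 2 ^ p) :
    ∀ a b : V, G.Adj a b ↔ a ≠ b ∧ (a = v0 ∨ b = v0) := by
  haveI : Nonempty V := ⟨v0⟩
  -- every ball B(v, d(v,v0)) with v ≠ v0 has exactly two elements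
  have hsum : ∑ v ∈ Finset.univ.erase v0, (((gBall G v (G.dist v v0)).card : ℝ)⁻¹) ^ p
      = ∑ _v ∈ Finset.univ.erase v0, ((2:ℝ)⁻¹) ^ p := by
    have hs2 : ∑ _v ∈ Finset.univ.erase v0, ((2:ℝ)⁻¹) ^ p
        = ((Fintype.card V : ℝ) - 1) / 2 ^ p := by
      rw [Finset.sum_const, nsmul_eq_mul, card_erase_cast, inv_two_rpow,
        div_eq_mul_inv, div_eq_mul_inv, one_mul]
    have hNsplit : Nfun G p v0
        = 1 + ∑ v ∈ Finset.univ.erase v0, (((gBall G v (G.dist v v0)).card : ℝ)⁻¹) ^ p := by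
      unfold Nfun
      rw [← Finset.add_sum_erase _ _ (Finset.mem_univ v0), gBall_self_zero hG]
      simp
    rw [hNsplit, ← hs2] at h
    linarith
  have hterm := (Finset.sum_eq_sum_iff_of_le
    (fun v hv => term_le hp0 v0 v (Finset.ne_of_mem_erase hv))).1 hsum
  have hcard2 : ∀ v : V, v ≠ v0 → (gBall G v (G.dist v v0)).card = 2 := by
    intro v hv
    have h1 := hterm v (Finset.mem_erase.2 ⟨hv, Finset.mem_univ v⟩)
    have h2 : ((gBall G v (G.dist v v0)).card : ℝ)⁻¹ = (2:ℝ)⁻¹ := by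
      have := congrArg (fun t : ℝ => t ^ p⁻¹) h1
      simpa [rpow_rpow_inv' hp0 (inv_nonneg.2 (Nat.cast_nonneg _)),
        rpow_rpow_inv' hp0 (by norm_num : (0:ℝ) ≤ (2:ℝ)⁻¹)] using this
    have h3 : ((gBall G v (G.dist v v0)).card : ℝ) = 2 := by
      have := inv_injective h2
      exact_mod_cast this
    exact_mod_cast h3
  have hball : ∀ v : V, v ≠ v0 → gBall G v (G.dist v v0) = {v, v0} := by
    intro v hv
    refine (Finset.eq_of_subset_of_card_le (pair_subset_gBall v0 v) ?_).symm
    rw [hcard2 v hv, card_pair' hv]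
  have hadj : ∀ v : V, v ≠ v0 → G.Adj v v0 := by
    intro v hv
    have hd0 : G.dist v v0 ≠ 0 := by
      rw [Ne, hG.dist_eq_zero_iff]; exact hv
    obtain ⟨q, hq⟩ := SimpleGraph.exists_walk_of_dist_ne_zero hd0
    have hlen : 0 < q.length := by rw [hq]; exact Nat.pos_of_ne_zero hd0
    have hadj1 : G.Adj v (q.getVert 1) := by
      have := q.adj_getVert_succ (i := 0) hlen
      rwa [q.getVert_zero] at this
    have hmem : q.getVert 1 ∈ gBall G v (G.dist v v0) := by
      apply mem_gBall.2
      calc G.dist v (q.getVert 1) ≤ 1 :=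
            le_of_eq (SimpleGraph.dist_eq_one_iff_adj.2 hadj1)
        _ ≤ G.dist v v0 := Nat.one_le_iff_ne_zero.2 hd0
    rw [hball v hv] at hmem
    rcases Finset.mem_insert.1 hmem with h' | h'
    · exact absurd h'.symm (G.ne_of_adj hadj1)
    · rw [Finset.mem_singleton] at h'
      rwa [h'] at hadj1
  have hnb : ∀ v : V, v ≠ v0 → ∀ w, G.Adj v w → w = v0 := by
    intro v hv w hw
    have hd1 : G.dist v v0 = 1 := SimpleGraph.dist_eq_one_iff_adj.2 (hadj v hv)
    have hmem : w ∈ gBall G v (G.dist v v0) := by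
      apply mem_gBall.2
      rw [hd1]
      exact le_of_eq (SimpleGraph.dist_eq_one_iff_adj.2 hw)
    rw [hball v hv] at hmem
    rcases Finset.mem_insert.1 hmem with h' | h'
    · exact absurd h'.symm (G.ne_of_adj hw)
    · rwa [Finset.mem_singleton] at h'
  intro a b
  constructor
  · intro hab
    refine ⟨G.ne_of_adj hab, ?_⟩
    rcases eq_or_ne a v0 with h' | h'
    · exact Or.inl h'
    · exact Or.inr (hnb a h' b hab)
  · rintro ⟨hne, h' | h'⟩
    · subst h'
      exact (hadj b (fun hb => hne hb.symm)).symm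
    · subst h'
      exact hadj a hne

lemma Nfun_of_isStar (hG : G.Connected) (hp0 : 0 < p) (v0 : V)
    (h : ∀ a b : V, G.Adj a b ↔ a ≠ b ∧ (a = v0 ∨ b = v0)) :
    Nfun G p v0 = 1 + ((Fintype.card V : ℝ) - 1) / 2 ^ p := by
  haveI : Nonempty V := ⟨v0⟩
  unfold Nfun
  rw [← Finset.add_sum_erase _ _ (Finset.mem_univ v0)]
  congr 1
  · rw [gBall_self_zero hG]; simp
  · have hterm : ∀ v ∈ Finset.univ.erase v0,
        (((gBall G v (G.dist v v0)).card : ℝ)⁻¹) ^ p = ((2:ℝ)⁻¹) ^ p := by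
      intro v hv
      have hne := Finset.ne_of_mem_erase hv
      have hadj : G.Adj v v0 := (h v v0).2 ⟨hne, Or.inr rfl⟩
      have hd : G.dist v v0 = 1 := SimpleGraph.dist_eq_one_iff_adj.2 hadj
      have hball : gBall G v (G.dist v v0) = {v, v0} := by
        refine Finset.Subset.antisymm ?_ (pair_subset_gBall v0 v)
        intro w hw
        have hw' := mem_gBall.1 hw
        rw [hd] at hw'
        rcases Nat.le_one_iff_eq_zero_or_eq_one.1 hw' with h0 | h1
        · rw [hG.dist_eq_zero_iff] at h0
          simp [← h0]
        · have hvw : G.Adj v w := SimpleGraph.dist_eq_one_iff_adj.1 h1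
          rcases ((h v w).1 hvw).2 with h' | h'
          · exact absurd h' hne
          · simp [h']
      rw [hball, card_pair' hne]
      norm_num
    rw [Finset.sum_congr rfl hterm, Finset.sum_const, nsmul_eq_mul, card_erase_cast,
      inv_two_rpow, div_eq_mul_inv, div_eq_mul_inv, one_mul]

lemma starGraph_adj {n : ℕ} (hn : 0 < n) (i j : Fin n) :
    (starGraph n).Adj i j ↔ i ≠ j ∧ (i = ⟨0, hn⟩ ∨ j = ⟨0, hn⟩) := by
  show (SimpleGraph.fromRel _).Adj i j ↔ _
  rw [SimpleGraph.fromRel_adj]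
  simp [Fin.ext_iff]

lemma iso_of_isStar {n : ℕ} {G : SimpleGraph (Fin n)} (v0 : Fin n)
    (h : ∀ a b, G.Adj a b ↔ a ≠ b ∧ (a = v0 ∨ b = v0)) :
    Nonempty (G ≃g starGraph n) := by
  have hn : 0 < n := v0.pos
  set z : Fin n := ⟨0, hn⟩ with hz
  set e := Equiv.swap v0 z with he
  have h1 : ∀ x : Fin n, e x = z ↔ x = v0 := by
    intro x
    rw [show z = e v0 from (Equiv.swap_apply_left v0 z).symm]
    exact e.apply_eq_iff_eq
  refine ⟨⟨e, ?_⟩⟩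
  intro a b
  rw [starGraph_adj hn, h a b]
  exact and_congr (not_congr e.apply_eq_iff_eq) (or_congr (h1 a) (h1 b))

lemma isStar_of_iso {n : ℕ} {G : SimpleGraph (Fin n)} (hn : 0 < n) (φ : G ≃g starGraph n) :
    ∀ a b, G.Adj a b ↔ a ≠ b ∧ (a = φ.symm ⟨0, hn⟩ ∨ b = φ.symm ⟨0, hn⟩) := by
  intro a b
  rw [← φ.map_rel_iff, starGraph_adj hn]
  have h1 : ∀ x : Fin n, φ x = ⟨0, hn⟩ ↔ x = φ.symm ⟨0, hn⟩ := by
    intro x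
    constructor
    · intro hx; rw [← hx]; simp
    · intro hx; rw [hx]; simp
  exact and_congr (not_congr (EmbeddingLike.apply_eq_iff_eq φ)) (or_congr (h1 a) (h1 b))

lemma delta_ratio (hp0 : 0 < p) (v0 : V) :
    pNorm p (maxOp G (kdelta v0)) / pNorm p (kdelta v0) = (Nfun G p v0) ^ (1/p) := by
  rw [pNorm_maxOp_kdelta, pNorm_kdelta hp0, div_one]

lemma opNorm_le [Nonempty V] (hp0 : 0 < p) (hp1 : p ≤ 1) {C : ℝ}
    (hC : ∀ v0 : V, Nfun G p v0 ≤ C) : opNorm G p ≤ C ^ (1/p) := by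
  haveI : Nonempty {f : V → ℝ // f ≠ 0} :=
    ⟨⟨kdelta (Classical.arbitrary V), kdelta_ne_zero _⟩⟩
  apply ciSup_le
  intro f
  rw [div_le_iff₀ (pNorm_pos hp0 f.2)]
  exact pNorm_maxOp_le hp0 hp1 f.1 hC

lemma le_opNorm [Nonempty V] (hp0 : 0 < p) (hp1 : p ≤ 1) {C : ℝ}
    (hC : ∀ v0 : V, Nfun G p v0 ≤ C) (v0 : V) :
    (Nfun G p v0) ^ (1/p) ≤ opNorm G p := by
  have hbdd : BddAbove (Set.range fun f : {f : V → ℝ // f ≠ 0} =>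
      pNorm p (maxOp G f.1) / pNorm p f.1) := by
    refine ⟨C ^ (1/p), ?_⟩
    rintro x ⟨f, rfl⟩
    rw [div_le_iff₀ (pNorm_pos hp0 f.2)]
    exact pNorm_maxOp_le hp0 hp1 f.1 hC
  have := le_ciSup hbdd ⟨kdelta v0, kdelta_ne_zero v0⟩
  rwa [delta_ratio hp0] at this

end Stmt10Aux


/-- the upper bound is attained exactly by graphs isomorphic to
the star. -/
theorem stmt10 (n : ℕ) (G : SimpleGraph (Fin n)) (hG : G.Connected)
    (p : ℝ) (hp0 : 0 < p) (hp1 : p ≤ 1) :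
    opNorm G p = (1 + ((n : ℝ) - 1) / 2 ^ p) ^ (1 / p)
      ↔ Nonempty (G ≃g starGraph n) := by
  haveI : Nonempty (Fin n) := hG.nonempty
  have hn : 0 < n := Fin.pos (Classical.arbitrary (Fin n))
  have hcard : ((Fintype.card (Fin n) : ℝ)) = (n : ℝ) := by rw [Fintype.card_fin]
  set C : ℝ := 1 + ((n : ℝ) - 1) / 2 ^ p with hCdef
  have hCbound : ∀ v0 : Fin n, Stmt10Aux.Nfun G p v0 ≤ C := by
    intro v0
    have := Stmt10Aux.Nfun_le hG hp0 v0
    rwa [hcard] at this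
  have hC0 : 0 ≤ C :=
    le_trans (Stmt10Aux.Nfun_nonneg (Classical.arbitrary (Fin n))) (hCbound _)
  obtain ⟨v1, hv1⟩ := Finite.exists_max (Stmt10Aux.Nfun G p)
  have hON : opNorm G p = (Stmt10Aux.Nfun G p v1) ^ (1/p) :=
    le_antisymm (Stmt10Aux.opNorm_le hp0 hp1 hv1)
      (Stmt10Aux.le_opNorm hp0 hp1 hv1 v1)
  constructor
  · intro hEq
    have h1 : (Stmt10Aux.Nfun G p v1) ^ (1/p) = C ^ (1/p) := by
      rw [← hON, hEq]
    have h2 : Stmt10Aux.Nfun G p v1 = C := by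
      rw [← Stmt10Aux.rpow_inv_rpow hp0 (Stmt10Aux.Nfun_nonneg v1),
        ← Stmt10Aux.rpow_inv_rpow hp0 hC0, h1]
    have hstar := Stmt10Aux.star_structure hG hp0 v1 (by rw [hcard]; exact h2)
    exact Stmt10Aux.iso_of_isStar v1 hstar
  · rintro ⟨φ⟩
    have hstar := Stmt10Aux.isStar_of_iso hn φ
    have h2 : Stmt10Aux.Nfun G p (φ.symm ⟨0, hn⟩) = C := by
      have := Stmt10Aux.Nfun_of_isStar hG hp0 _ hstar
      rwa [hcard] at this
    have h3 : Stmt10Aux.Nfun G p v1 = C :=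
      le_antisymm (hCbound v1) (h2 ▸ hv1 _)
    rw [hON, h3]
end
end
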